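/- arXiv:0809.4175 — 4 statements merged into one kernel-verified Lean document; each statement's English description precedes it below -/
import Mathlib

section
/- There exist constants 0 < C₂, C₃ < ∞, depending only on D, such that uniformly in k ∈ ℤ and real s > 0, α_s(k) ≤ (C₂/(√s + 1)) · exp(−C₃ k²/(s + |k|)). (The refined local limit bound P{S(s) = k} ≤ C₂(√s+1)^{-1} exp[−C₃ k²/(s+|k|)] established in the proof of Theorem 3.) -/
/-- `p n k` is the `n`-step distribution of the discrete-time simple symmetric
random walk on `ℤ` started at `0`. -/
noncomputable def p (n : ℕ) (k : ℤ) : ℝ :=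
  if |k| ≤ (n : ℤ) ∧ Even ((n : ℤ) + k) then
    (Nat.choose n (((n : ℤ) + k).toNat / 2) : ℝ) / 2 ^ n
  else 0

/-- `alpha D t k` is the time-`t` distribution of a continuous-time simple symmetric
random walk on `ℤ` with jump rate `D` started at `0`. -/
noncomputable def alpha (D t : ℝ) (k : ℤ) : ℝ :=
  ∑' n : ℕ, Real.exp (-D * t) * (D * t) ^ n / (Nat.factorial n) * p n k


theorem Nat.cb_sq (a : ℕ) : Nat.centralBinom a ^ 2 * (2*a+1) ≤ 16^a := by
  induction a with
  | zero => simp [Nat.centralBinom_zero]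
  | succ a ih =>
    have key := Nat.succ_mul_centralBinom_succ a
    have hpos : 0 < (a+1)^2 := by positivity
    apply Nat.le_of_mul_le_mul_left _ hpos
    calc (a+1)^2 * (Nat.centralBinom (a+1) ^ 2 * (2*(a+1)+1))
        = ((a+1) * Nat.centralBinom (a+1))^2 * (2*a+3) := by ring
      _ = (2 * (2*a+1) * Nat.centralBinom a)^2 * (2*a+3) := by rw [key]
      _ = (4*(2*a+1)*(2*a+3)) * (Nat.centralBinom a ^2 * (2*a+1)) := by ring
      _ ≤ (4*(2*a+1)*(2*a+3)) * 16^a := Nat.mul_le_mul_left _ ih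
      _ ≤ ((a+1)^2 * 16) * 16^a := by nlinarith
      _ = (a+1)^2 * 16^(a+1) := by ring



theorem Nat.central_choose_sq (n : ℕ) :
    Nat.choose n ((n+1)/2) ^ 2 * (n+1) ≤ 4 ^ n := by
  have h16 : ∀ b : ℕ, (16:ℕ)^b = 4^(2*b) := by
    intro b; rw [show (16:ℕ) = 4^2 by norm_num, ← pow_mul]
  rcases Nat.even_or_odd n with ⟨a, ha⟩ | ⟨a, ha⟩
  · subst ha
    have h1 : (a + a + 1)/2 = a := by omega
    rw [h1]
    have := Nat.cb_sq a
    rw [h16 a] at this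
    have hcb : Nat.centralBinom a = Nat.choose (a+a) a := by
      rw [Nat.centralBinom]; ring_nf
    rw [hcb] at this
    calc Nat.choose (a+a) a ^2 * (a+a+1) = Nat.choose (a+a) a ^2 * (2*a+1) := by ring_nf
      _ ≤ 4^(2*a) := this
      _ = 4^(a+a) := by ring_nf
  · subst ha
    have h1 : (2*a + 1 + 1)/2 = a + 1 := by omega
    rw [h1]
    have hsymm : Nat.choose (2*a+1) a = Nat.choose (2*a+1) (a+1) := by
      have := Nat.choose_symm (n := 2*a+1) (k := a+1) (by omega)
      rw [show 2*a+1-(a+1) = a by omega] at this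
      exact this
    have hcb : Nat.centralBinom (a+1) = 2 * Nat.choose (2*a+1) (a+1) := by
      rw [Nat.centralBinom, show 2*(a+1) = (2*a+1) + 1 by ring, Nat.choose_succ_succ']
      omega
    have hc := Nat.cb_sq (a+1)
    rw [hcb, h16] at hc
    have h4 : (4:ℕ)^(2*(a+1)) = 4 * 4^(2*a+1) := by
      rw [show 2*(a+1) = (2*a+1)+1 by ring, pow_succ]; ring
    rw [h4] at hc
    have key : 4 * (Nat.choose (2*a+1) (a+1) ^2 * (2*a+1+1)) ≤ 4 * 4^(2*a+1) := by
      calc 4 * (Nat.choose (2*a+1) (a+1) ^2 * (2*a+1+1))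
          = (2 * Nat.choose (2*a+1) (a+1))^2 * (2*a+2) := by ring
        _ ≤ (2 * Nat.choose (2*a+1) (a+1))^2 * (2*(a+1)+1) :=
            Nat.mul_le_mul_left _ (by omega)
        _ ≤ 4 * 4^(2*a+1) := hc
    exact Nat.le_of_mul_le_mul_left key (by norm_num)



theorem central_choose_real (n : ℕ) :
    (Nat.choose n ((n+1)/2) : ℝ) ≤ 2^n / Real.sqrt (n+1) := by
  have h := Nat.central_choose_sq n
  have hc : ((Nat.choose n ((n+1)/2) : ℝ))^2 * (n+1) ≤ 4^n := by exact_mod_cast h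
  have hs : (0:ℝ) < Real.sqrt (n+1) := Real.sqrt_pos.mpr (by positivity)
  rw [le_div_iff₀ hs]
  have hsq : (Real.sqrt (n+1))^2 = (n:ℝ)+1 := Real.sq_sqrt (by positivity)
  have h4 : (4:ℝ)^n = (2^n)^2 := by rw [← pow_mul, mul_comm, pow_mul]; norm_num
  have hcn : (0:ℝ) ≤ (Nat.choose n ((n+1)/2):ℝ) := Nat.cast_nonneg _
  nlinarith [hcn, hs.le, pow_pos (show (0:ℝ)<2 by norm_num) n]

theorem choose_succ_le (n m : ℕ) (h : n ≤ 2*m) :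
    (Nat.choose n (m+1) : ℝ) ≤ Nat.choose n m * Real.exp (-(((2*m+1:ℝ) - n))/(n+1)) := by
  rcases lt_or_ge m n with hmn | hmn
  · have hid := Nat.choose_succ_right_eq n m
    have hidR : (Nat.choose n (m+1) : ℝ) * (m+1) = Nat.choose n m * ((n:ℝ) - m) := by
      have := congrArg (Nat.cast : ℕ → ℝ) hid
      push_cast at this
      rw [Nat.cast_sub hmn.le] at this
      push_cast at this
      linarith [this]
    have hm1 : (0:ℝ) < (m:ℝ)+1 := by positivity
    have hstep : ((n:ℝ) - m)/((m:ℝ)+1) ≤ Real.exp (-(((2*m+1:ℝ) - n))/(n+1)) := by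
      have hx : ((n:ℝ) - m)/((m:ℝ)+1) = 1 - ((2*m+1:ℝ) - n)/((m:ℝ)+1) := by
        field_simp; ring
      rw [hx]
      have h1 : 1 - ((2*m+1:ℝ) - n)/((m:ℝ)+1) ≤ Real.exp (-(((2*m+1:ℝ) - n)/((m:ℝ)+1))) :=
        Real.one_sub_le_exp_neg _
      apply h1.trans
      apply Real.exp_le_exp.mpr
      rw [neg_div, neg_le_neg_iff]
      have hnum : (0:ℝ) ≤ (2*m+1:ℝ) - n := by
        have : (n:ℝ) ≤ 2*m := by exact_mod_cast h
        linarith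
      apply div_le_div_of_nonneg_left hnum hm1
      have : (m:ℝ) ≤ n := by exact_mod_cast hmn.le
      linarith
    calc (Nat.choose n (m+1) : ℝ) = Nat.choose n m * (((n:ℝ) - m)/((m:ℝ)+1)) := by
          field_simp at hidR ⊢; linarith [hidR]
      _ ≤ Nat.choose n m * Real.exp (-(((2*m+1:ℝ) - n))/(n+1)) := by
          apply mul_le_mul_of_nonneg_left hstep (Nat.cast_nonneg _)
  · have : Nat.choose n (m+1) = 0 := Nat.choose_eq_zero_of_lt (by omega)
    rw [this]
    push_cast
    positivity

theorem choose_le_central_mul (n j : ℕ) :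
    (Nat.choose n ((n+1)/2 + j) : ℝ) ≤
      Nat.choose n ((n+1)/2) * Real.exp (-(j:ℝ)^2/(n+1)) := by
  induction j with
  | zero => simp
  | succ j ih =>
    have hm : n ≤ 2*((n+1)/2 + j) := by omega
    have hstep := choose_succ_le n ((n+1)/2 + j) hm
    push_cast at hstep ih ⊢
    refine hstep.trans ?_
    refine le_trans (mul_le_mul_of_nonneg_right ih (Real.exp_nonneg _)) ?_
    rw [mul_assoc]
    apply mul_le_mul_of_nonneg_left _ (Nat.cast_nonneg _)
    rw [← Real.exp_add]
    apply Real.exp_le_exp.mpr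
    have hn1 : (0:ℝ) < (n:ℝ)+1 := by positivity
    have hfloor : (n:ℝ) ≤ 2*(((n+1)/2 : ℕ):ℝ) := by
      exact_mod_cast (by omega : n ≤ 2*((n+1)/2))
    rw [← add_div, div_le_div_iff₀ hn1 hn1]
    nlinarith [hfloor]

theorem p_nonneg (n : ℕ) (k : ℤ) : 0 ≤ p n k := by
  unfold p; split
  · positivity
  · exact le_rfl

theorem p_eq_zero (n : ℕ) (k : ℤ) (h : (n:ℤ) < |k|) : p n k = 0 := by
  unfold p; rw [if_neg]; rintro ⟨h1, -⟩; omega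

theorem p_symm (n : ℕ) (k : ℤ) : p n (-k) = p n k := by
  unfold p
  have habs : |(-k)| = |k| := abs_neg k
  have hev : Even ((n:ℤ) + -k) ↔ Even ((n:ℤ) + k) := by
    constructor <;> (rintro ⟨r, hr⟩; exact ⟨(n:ℤ) - r, by omega⟩)
  by_cases hc : |k| ≤ (n : ℤ) ∧ Even ((n : ℤ) + k)
  · rw [if_pos ⟨habs ▸ hc.1, hev.mpr hc.2⟩, if_pos hc]
    obtain ⟨hk1, hk2⟩ := abs_le.mp hc.1
    have h3 : ((n:ℤ) + k).toNat % 2 = 0 := by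
      rcases hc.2 with ⟨r, hr⟩; omega
    have h1 : ((n:ℤ) + -k).toNat = 2*n - ((n:ℤ) + k).toNat := by omega
    have h2 : ((n:ℤ) + k).toNat ≤ 2*n := by omega
    congr 2
    rw [h1, show (2*n - ((n:ℤ)+k).toNat)/2 = n - ((n:ℤ)+k).toNat/2 by omega,
      Nat.choose_symm (by omega)]
  · rw [if_neg, if_neg hc]
    rintro ⟨a1, a2⟩
    exact hc ⟨habs ▸ a1, hev.mp a2⟩

theorem exp_half_lt_two : Real.exp (1/2 : ℝ) < 2 := by
  nlinarith [Real.exp_one_lt_d9, Real.exp_pos (1/2 : ℝ),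
    Real.exp_add (1/2 : ℝ) (1/2 : ℝ), Real.exp_pos (1:ℝ)]

theorem p_le_aux (n : ℕ) (k : ℤ) (hk : 0 ≤ k) :
    p n k ≤ 2 / Real.sqrt (n+1) * Real.exp (-(k:ℝ)^2/(4*((n:ℝ)+1))) := by
  unfold p
  split
  case isFalse => positivity
  case isTrue hc =>
    obtain ⟨habs, heven⟩ := hc
    obtain ⟨hkl, hkr⟩ := abs_le.mp habs
    set K := k.toNat with hK
    have hkK : k = (K : ℤ) := (Int.toNat_of_nonneg hk).symm
    have hKn : K ≤ n := by omega
    have htn : ((n:ℤ) + k).toNat = n + K := by omega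
    have hevN : (n + K) % 2 = 0 := by
      rcases heven with ⟨r, hr⟩; omega
    rw [htn]
    -- m = (n+1)/2 + j
    have hm_ge : (n+1)/2 ≤ (n+K)/2 := by omega
    set j := (n+K)/2 - (n+1)/2 with hj
    have hmj : (n+K)/2 = (n+1)/2 + j := by omega
    have hj1 : K ≤ 2*j + 1 := by omega
    have hj2 : 2*j ≤ K := by omega
    have hX : (0:ℝ) < (n:ℝ) + 1 := by positivity
    have hs : (0:ℝ) < Real.sqrt ((n:ℝ)+1) := Real.sqrt_pos.mpr hX
    have step1 : (Nat.choose n ((n+K)/2) : ℝ) ≤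
        (2^n / Real.sqrt ((n:ℝ)+1)) * Real.exp (-(j:ℝ)^2/((n:ℝ)+1)) := by
      rw [hmj]
      refine (choose_le_central_mul n j).trans ?_
      have := central_choose_real n
      push_cast at this ⊢
      exact mul_le_mul_of_nonneg_right this (Real.exp_nonneg _)
    have step2 : Real.exp (-(j:ℝ)^2/((n:ℝ)+1)) ≤
        Real.exp (1/2 : ℝ) * Real.exp (-(K:ℝ)^2/(4*((n:ℝ)+1))) := by
      rw [← Real.exp_add]
      apply Real.exp_le_exp.mpr
      have hj1R : (K:ℝ) ≤ 2*(j:ℝ) + 1 := by exact_mod_cast hj1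
      have hj2R : 2*(j:ℝ) ≤ (K:ℝ) := by exact_mod_cast hj2
      have hKnR : (K:ℝ) ≤ (n:ℝ) := by exact_mod_cast hKn
      have hprod : 0 ≤ (2*(j:ℝ) + 1 - K) * (2*(j:ℝ) + 1 + K) := by
        apply mul_nonneg
        · linarith
        · have : (0:ℝ) ≤ (K:ℝ) := Nat.cast_nonneg K
          have : (0:ℝ) ≤ (j:ℝ) := Nat.cast_nonneg j
          linarith
      have key : (K:ℝ)^2 ≤ 4*(j:ℝ)^2 + 2*((n:ℝ)+1) := by nlinarith [hprod, hj2R, hKnR]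
      have e1 : -(j:ℝ)^2/((n:ℝ)+1) = (-4*(j:ℝ)^2)/(4*((n:ℝ)+1)) := by
        rw [div_eq_div_iff (ne_of_gt hX) (by positivity)]; ring
      have e2 : (1:ℝ)/2 + -(K:ℝ)^2/(4*((n:ℝ)+1)) = (2*((n:ℝ)+1) - (K:ℝ)^2)/(4*((n:ℝ)+1)) := by
        field_simp; ring
      rw [e1, e2, div_le_div_iff₀ (by positivity) (by positivity)]
      nlinarith [key]
    have hker : (k:ℝ)^2 = (K:ℝ)^2 := by rw [hkK]; push_cast; ring
    rw [hker]
    have hchain : (Nat.choose n ((n+K)/2) : ℝ) ≤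
        (2^n / Real.sqrt ((n:ℝ)+1)) * (Real.exp (1/2:ℝ) * Real.exp (-(K:ℝ)^2/(4*((n:ℝ)+1)))) :=
      step1.trans (mul_le_mul_of_nonneg_left step2 (by positivity))
    calc (Nat.choose n ((n+K)/2) : ℝ) / 2^n
        ≤ ((2^n / Real.sqrt ((n:ℝ)+1)) * (Real.exp (1/2:ℝ) * Real.exp (-(K:ℝ)^2/(4*((n:ℝ)+1))))) / 2^n := by
          gcongr
      _ = (Real.exp (1/2:ℝ) / Real.sqrt ((n:ℝ)+1)) * Real.exp (-(K:ℝ)^2/(4*((n:ℝ)+1))) := by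
          field_simp
      _ ≤ 2 / Real.sqrt ((n:ℝ)+1) * Real.exp (-(K:ℝ)^2/(4*((n:ℝ)+1))) := by
          gcongr
          exact exp_half_lt_two.le


theorem exp_series (x : ℝ) : Real.exp x = ∑' n : ℕ, x ^ n / n.factorial := by
  rw [Real.exp_eq_exp_ℝ, NormedSpace.exp_eq_tsum_div]

section WL
variable (L : ℝ) (hL : 0 < L)

theorem summable_w : Summable (fun n : ℕ => Real.exp (-L) * L^n / n.factorial) := by
  have := (Real.summable_pow_div_factorial L).mul_left (Real.exp (-L))
  simpa [mul_div_assoc] using this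

theorem tsum_w : ∑' n : ℕ, Real.exp (-L) * L^n / n.factorial = 1 := by
  simp_rw [mul_div_assoc]
  rw [tsum_mul_left, ← exp_series, ← Real.exp_add]
  simp

include hL

theorem w_nonneg (n : ℕ) : 0 ≤ Real.exp (-L) * L^n / n.factorial := by positivity

theorem tsum_w_div_linear :
    ∑' n : ℕ, Real.exp (-L) * L^n / n.factorial / ((n:ℝ)+1) ≤ 1/L := by
  have hterm : ∀ n : ℕ, Real.exp (-L) * L^n / n.factorial / ((n:ℝ)+1)
      = (Real.exp (-L)/L) * (L^(n+1) / (n+1).factorial) := by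
    intro n
    rw [Nat.factorial_succ]
    have h1 : ((n+1).factorial : ℝ) ≠ 0 := by positivity
    have h2 : ((n:ℝ)+1) ≠ 0 := by positivity
    field_simp
    push_cast; ring
  simp_rw [hterm]
  rw [tsum_mul_left]
  have hsum : Summable (fun n : ℕ => L^(n+1) / ((n+1).factorial : ℝ)) := by
    exact_mod_cast (Real.summable_pow_div_factorial L).comp_injective (add_left_injective 1)
  have hshift : (1:ℝ) + ∑' n : ℕ, L^(n+1) / ((n+1).factorial : ℝ) = Real.exp L := by
    rw [exp_series]
    rw [Summable.tsum_eq_zero_add (Real.summable_pow_div_factorial L)]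
    norm_num
  have hle : ∑' n : ℕ, L^(n+1) / ((n+1).factorial : ℝ) ≤ Real.exp L := by linarith
  calc Real.exp (-L)/L * ∑' n : ℕ, L^(n+1) / ((n+1).factorial : ℝ)
      ≤ Real.exp (-L)/L * Real.exp L := by
        apply mul_le_mul_of_nonneg_left hle (by positivity)
    _ = 1/L := by rw [div_mul_eq_mul_div, ← Real.exp_add, neg_add_cancel, Real.exp_zero]
      
theorem tsum_w_div_sqrt :
    ∑' n : ℕ, Real.exp (-L) * L^n / n.factorial / Real.sqrt ((n:ℝ)+1)
      ≤ 2/(Real.sqrt L + 1) := by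
  have hw := summable_w L
  have hsL : 0 < Real.sqrt L := Real.sqrt_pos.mpr hL
  have hsum_sqrt : Summable (fun n : ℕ => Real.exp (-L) * L^n / n.factorial / Real.sqrt ((n:ℝ)+1)) := by
    apply Summable.of_nonneg_of_le (fun n => by positivity) (fun n => ?_) hw
    apply div_le_self (w_nonneg L hL n)
    rw [Real.one_le_sqrt]  -- maybe needs arg
    · linarith [Nat.cast_nonneg (α := ℝ) n]
  have hsum_lin : Summable (fun n : ℕ => Real.exp (-L) * L^n / n.factorial / ((n:ℝ)+1)) := by
    apply Summable.of_nonneg_of_le (fun n => by positivity) (fun n => ?_) hw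
    apply div_le_self (w_nonneg L hL n)
    linarith [Nat.cast_nonneg (α := ℝ) n]
  rcases le_or_gt 1 L with hL1 | hL1
  · -- L ≥ 1 : AM-GM
    have hpt : ∀ n : ℕ, Real.exp (-L) * L^n / n.factorial / Real.sqrt ((n:ℝ)+1)
        ≤ (1/(2*Real.sqrt L)) * (Real.exp (-L) * L^n / n.factorial)
          + (Real.sqrt L/2) * (Real.exp (-L) * L^n / n.factorial / ((n:ℝ)+1)) := by
      intro n
      have hv : 0 < Real.sqrt ((n:ℝ)+1) := Real.sqrt_pos.mpr (by positivity)
      have hv2 : (Real.sqrt ((n:ℝ)+1))^2 = (n:ℝ)+1 := Real.sq_sqrt (by positivity)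
      have hu2 : (Real.sqrt L)^2 = L := Real.sq_sqrt hL.le
      have key : 1/Real.sqrt ((n:ℝ)+1) ≤ 1/(2*Real.sqrt L) + (Real.sqrt L/2)/((n:ℝ)+1) := by
        rw [div_add_div _ _ (by positivity) (by positivity), div_le_div_iff₀ hv (by positivity)]
        nlinarith [sq_nonneg (Real.sqrt L - Real.sqrt ((n:ℝ)+1)), hv.le, hsL.le]
      have hwn := w_nonneg L hL n
      calc Real.exp (-L) * L^n / n.factorial / Real.sqrt ((n:ℝ)+1)
          = (Real.exp (-L) * L^n / n.factorial) * (1/Real.sqrt ((n:ℝ)+1)) := by ring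
        _ ≤ (Real.exp (-L) * L^n / n.factorial) * (1/(2*Real.sqrt L) + (Real.sqrt L/2)/((n:ℝ)+1)) :=
            mul_le_mul_of_nonneg_left key hwn
        _ = (1/(2*Real.sqrt L)) * (Real.exp (-L) * L^n / n.factorial)
            + (Real.sqrt L/2) * (Real.exp (-L) * L^n / n.factorial / ((n:ℝ)+1)) := by ring
    have hS : ∑' n : ℕ, Real.exp (-L) * L^n / n.factorial / Real.sqrt ((n:ℝ)+1)
        ≤ (1/(2*Real.sqrt L)) * 1 + (Real.sqrt L/2) * (1/L) := by
      calc ∑' n : ℕ, Real.exp (-L) * L^n / n.factorial / Real.sqrt ((n:ℝ)+1)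
          ≤ ∑' n : ℕ, ((1/(2*Real.sqrt L)) * (Real.exp (-L) * L^n / n.factorial)
            + (Real.sqrt L/2) * (Real.exp (-L) * L^n / n.factorial / ((n:ℝ)+1))) := by
            apply Summable.tsum_le_tsum hpt hsum_sqrt
            exact Summable.add (hw.mul_left _) (hsum_lin.mul_left _)
        _ = (1/(2*Real.sqrt L)) * ∑' n : ℕ, (Real.exp (-L) * L^n / n.factorial)
            + (Real.sqrt L/2) * ∑' n : ℕ, (Real.exp (-L) * L^n / n.factorial / ((n:ℝ)+1)) := by
            rw [Summable.tsum_add (hw.mul_left _) (hsum_lin.mul_left _), tsum_mul_left, tsum_mul_left]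
        _ ≤ (1/(2*Real.sqrt L)) * 1 + (Real.sqrt L/2) * (1/L) := by
            have h1 := tsum_w L
            have h2 := tsum_w_div_linear L hL
            apply add_le_add
            · exact mul_le_mul_of_nonneg_left (le_of_eq h1) (by positivity)
            · exact mul_le_mul_of_nonneg_left h2 (by positivity)
      -- done
    have : (1/(2*Real.sqrt L)) * 1 + (Real.sqrt L/2) * (1/L) = 1/Real.sqrt L := by
      have hu2 : (Real.sqrt L)^2 = L := Real.sq_sqrt hL.le
      field_simp
      nlinarith [hu2]
    rw [this] at hS
    apply hS.trans
    rw [div_le_div_iff₀ hsL (by positivity)]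
    have : 1 ≤ Real.sqrt L := Real.one_le_sqrt.mpr hL1
    linarith
  · -- L < 1
    have hpt : ∀ n : ℕ, Real.exp (-L) * L^n / n.factorial / Real.sqrt ((n:ℝ)+1)
        ≤ Real.exp (-L) * L^n / n.factorial := fun n => by
      apply div_le_self (w_nonneg L hL n)
      rw [Real.one_le_sqrt]
      linarith [Nat.cast_nonneg (α := ℝ) n]
    calc ∑' n : ℕ, Real.exp (-L) * L^n / n.factorial / Real.sqrt ((n:ℝ)+1)
        ≤ ∑' n : ℕ, Real.exp (-L) * L^n / n.factorial := Summable.tsum_le_tsum hpt hsum_sqrt hw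
      _ = 1 := tsum_w L
      _ ≤ 2/(Real.sqrt L + 1) := by
        rw [le_div_iff₀ (by positivity)]
        have : Real.sqrt L ≤ 1 := by
          rw [show (1:ℝ) = Real.sqrt 1 by simp]
          exact Real.sqrt_le_sqrt hL1.le
        linarith

theorem tsum_w_tail (T : ℕ) :
    ∑' n : ℕ, Real.exp (-L) * L^(n+T) / (n+T).factorial ≤ Real.exp L / 2^T := by
  have h2L : Summable (fun m : ℕ => (2*L)^m / (m.factorial : ℝ)) :=
    Real.summable_pow_div_factorial (2*L)
  have htail : Summable (fun n : ℕ => (2*L)^(n+T) / ((n+T).factorial : ℝ)) :=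
    ((summable_nat_add_iff T).mpr h2L)
  have hterm : ∀ n : ℕ, Real.exp (-L) * L^(n+T) / (n+T).factorial
      ≤ (Real.exp (-L) / 2^T) * ((2*L)^(n+T) / ((n+T).factorial : ℝ)) := by
    intro n
    have h1 : (2*L)^(n+T) = 2^(n+T) * L^(n+T) := by rw [mul_pow]
    have h2 : (2:ℝ)^T ≤ 2^(n+T) := by
      apply pow_le_pow_right₀ (by norm_num) (by omega)
    have hfac : (0:ℝ) < ((n+T).factorial : ℝ) := by positivity
    have hq : (1:ℝ) ≤ 2^(n+T)/2^T := by
      rw [le_div_iff₀ (by positivity : (0:ℝ) < 2^T)]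
      simpa using h2
    calc Real.exp (-L) * L^(n+T) / ((n+T).factorial:ℝ)
        = (Real.exp (-L) * L^(n+T) / ((n+T).factorial:ℝ)) * 1 := (mul_one _).symm
      _ ≤ (Real.exp (-L) * L^(n+T) / ((n+T).factorial:ℝ)) * (2^(n+T)/2^T) :=
          mul_le_mul_of_nonneg_left hq (by positivity)
      _ = (Real.exp (-L) / 2^T) * ((2*L)^(n+T) / ((n+T).factorial : ℝ)) := by
          rw [h1]; ring
  have hsum_le : ∑' n : ℕ, (2*L)^(n+T) / ((n+T).factorial : ℝ) ≤ Real.exp (2*L) := by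
    have hsplit := Summable.sum_add_tsum_nat_add (f := fun m : ℕ => (2*L)^m / (m.factorial : ℝ)) T h2L
    have hpos : 0 ≤ ∑ i ∈ Finset.range T, (2*L)^i / (i.factorial : ℝ) := by
      apply Finset.sum_nonneg; intro i _; positivity
    rw [exp_series]
    linarith
  calc ∑' n : ℕ, Real.exp (-L) * L^(n+T) / (n+T).factorial
      ≤ ∑' n : ℕ, (Real.exp (-L) / 2^T) * ((2*L)^(n+T) / ((n+T).factorial : ℝ)) := by
        apply Summable.tsum_le_tsum hterm
        · apply Summable.of_nonneg_of_le (fun n => by positivity) hterm (htail.mul_left _)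
        · exact htail.mul_left _
    _ = (Real.exp (-L) / 2^T) * ∑' n : ℕ, ((2*L)^(n+T) / ((n+T).factorial : ℝ)) := tsum_mul_left
    _ ≤ (Real.exp (-L) / 2^T) * Real.exp (2*L) := by
        apply mul_le_mul_of_nonneg_left hsum_le (by positivity)
    _ = Real.exp L / 2^T := by
        rw [div_mul_eq_mul_div, ← Real.exp_add]
        ring_nf
end WL

theorem p_le (n : ℕ) (k : ℤ) :
    p n k ≤ 2 / Real.sqrt ((n:ℝ)+1) * Real.exp (-(k:ℝ)^2/(4*((n:ℝ)+1))) := by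
  rcases le_or_gt 0 k with hk | hk
  · exact p_le_aux n k hk
  · have h := p_le_aux n (-k) (by omega)
    rw [p_symm n k] at h
    push_cast at h
    simpa [neg_sq] using h

theorem p_le_two (n : ℕ) (k : ℤ) : p n k ≤ 2 := by
  refine (p_le n k).trans ?_
  have h1 : (1:ℝ) ≤ Real.sqrt ((n:ℝ)+1) := by
    rw [Real.one_le_sqrt]; linarith [Nat.cast_nonneg (α := ℝ) n]
  have h2 : Real.exp (-(k:ℝ)^2/(4*((n:ℝ)+1))) ≤ 1 := by
    apply Real.exp_le_one_iff.mpr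
    apply div_nonpos_of_nonpos_of_nonneg (by nlinarith [sq_nonneg ((k:ℝ))]) (by positivity)
  calc 2 / Real.sqrt ((n:ℝ)+1) * Real.exp (-(k:ℝ)^2/(4*((n:ℝ)+1)))
      ≤ 2 / 1 * 1 := by
        apply mul_le_mul ?_ h2 (Real.exp_nonneg _) (by norm_num)
        apply div_le_div_of_nonneg_left (by norm_num) (by norm_num) h1
    _ = 2 := by norm_num

theorem summable_w_div_sqrt (L : ℝ) (hL : 0 < L) :
    Summable (fun n : ℕ => Real.exp (-L) * L^n / n.factorial / Real.sqrt ((n:ℝ)+1)) := by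
  apply Summable.of_nonneg_of_le (fun n => by positivity) (fun n => ?_) (summable_w L)
  apply div_le_self (by positivity)
  rw [Real.one_le_sqrt]
  linarith [Nat.cast_nonneg (α := ℝ) n]

set_option maxHeartbeats 1000000 in
/-- Refined local limit bound:
`P{S(s) = k} ≤ C₂ (√s + 1)⁻¹ exp[-C₃ k² / (s + |k|)]` uniformly in `k` and `s > 0`. -/
theorem alpha_le_gaussian_bound (D : ℝ) (hD : 0 < D) :
    ∃ C₂ C₃ : ℝ, 0 < C₂ ∧ 0 < C₃ ∧ ∀ (k : ℤ) (s : ℝ), 0 < s →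
      alpha D s k ≤ C₂ / (Real.sqrt s + 1) *
        Real.exp (-C₃ * (k : ℝ) ^ 2 / (s + |(k : ℝ)|)) := by
  have hsD : 0 < Real.sqrt D := Real.sqrt_pos.mpr hD
  set M : ℝ := max 1 (Real.sqrt D)⁻¹ with hMdef
  set c : ℝ := max D 1 with hcdef
  have hM1 : (1:ℝ) ≤ M := le_max_left _ _
  have hc1 : (1:ℝ) ≤ c := le_max_right _ _
  have hDc : D ≤ c := le_max_left _ _
  have hMD : 1 ≤ M * Real.sqrt D := by
    have h := le_max_right 1 (Real.sqrt D)⁻¹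
    calc (1:ℝ) = (Real.sqrt D)⁻¹ * Real.sqrt D := by field_simp
      _ ≤ M * Real.sqrt D := by
          apply mul_le_mul_of_nonneg_right h hsD.le
  refine ⟨8 * M, 1/(8 * c), by positivity, by positivity, ?_⟩
  intro k s hs
  set L : ℝ := D * s with hLdef
  have hL : 0 < L := mul_pos hD hs
  set T : ℕ := max (Nat.ceil (2*L)) k.natAbs with hTdef
  have habsk : |(k:ℝ)| = (k.natAbs : ℝ) := by
    rw [Nat.cast_natAbs, Int.cast_abs]
  have hsk : (0:ℝ) < s + |(k:ℝ)| := by positivity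
  set G : ℝ := Real.exp (-(1/(8*c)) * (k:ℝ)^2 / (s + |(k:ℝ)|)) with hGdef
  have hG0 : 0 < G := Real.exp_pos _
  -- the walk weight
  have halpha : alpha D s k = ∑' n : ℕ, (Real.exp (-L) * L^n / n.factorial) * p n k := by
    unfold alpha
    congr 1; funext n
    rw [hLdef, neg_mul]
  have hwnn : ∀ n : ℕ, (0:ℝ) ≤ Real.exp (-L) * L^n / n.factorial := fun n => by positivity
  have hf_sum : Summable (fun n : ℕ => (Real.exp (-L) * L^n / n.factorial) * p n k) := by
    apply Summable.of_nonneg_of_le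
      (fun n => mul_nonneg (hwnn n) (p_nonneg n k)) (fun n => ?_) ((summable_w L).mul_right 2)
    exact mul_le_mul_of_nonneg_left (p_le_two n k) (hwnn n)
  have hsplit := Summable.sum_add_tsum_nat_add
    (f := fun n : ℕ => (Real.exp (-L) * L^n / n.factorial) * p n k) T hf_sum
  -- PART A
  have hE0 : (0:ℝ) < Real.exp (-(k:ℝ)^2/(8*(L+1))) := Real.exp_pos _
  have hA : ∑ n ∈ Finset.range T, (Real.exp (-L) * L^n / n.factorial) * p n k
      ≤ 4 / (Real.sqrt L + 1) * Real.exp (-(k:ℝ)^2/(8*(L+1))) := by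
    have hterm : ∀ n ∈ Finset.range T, (Real.exp (-L) * L^n / n.factorial) * p n k
        ≤ (2 * Real.exp (-(k:ℝ)^2/(8*(L+1)))) *
          (Real.exp (-L) * L^n / n.factorial / Real.sqrt ((n:ℝ)+1)) := by
      intro n hn
      rw [Finset.mem_range] at hn
      by_cases hz : p n k = 0
      · rw [hz, mul_zero]; positivity
      · have hkn : |k| ≤ (n:ℤ) := by
          by_contra hcon
          exact hz (p_eq_zero n k (not_le.mp hcon))
        have hknat : k.natAbs ≤ n := by
          have h' : ((k.natAbs : ℤ)) ≤ (n:ℤ) := by rwa [← Int.abs_eq_natAbs]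
          exact_mod_cast h'
        have hceil : n < Nat.ceil (2*L) := by
          rcases max_cases (Nat.ceil (2*L)) k.natAbs with ⟨h1, h2⟩ | ⟨h1, h2⟩ <;> omega
        have hreal : (n:ℝ) + 1 ≤ 2*L + 1 := by
          have h1 : ((n:ℕ):ℝ) + 1 ≤ (Nat.ceil (2*L) : ℝ) := by exact_mod_cast hceil
          have h2 : (Nat.ceil (2*L) : ℝ) < 2*L + 1 := Nat.ceil_lt_add_one (by positivity)
          linarith
        have hexp : Real.exp (-(k:ℝ)^2/(4*((n:ℝ)+1))) ≤ Real.exp (-(k:ℝ)^2/(8*(L+1))) := by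
          apply Real.exp_le_exp.mpr
          rw [neg_div, neg_div, neg_le_neg_iff]
          apply div_le_div_of_nonneg_left (sq_nonneg _) (by positivity)
          linarith
        calc (Real.exp (-L) * L^n / n.factorial) * p n k
            ≤ (Real.exp (-L) * L^n / n.factorial) *
              (2 / Real.sqrt ((n:ℝ)+1) * Real.exp (-(k:ℝ)^2/(4*((n:ℝ)+1)))) :=
              mul_le_mul_of_nonneg_left (p_le n k) (hwnn n)
          _ ≤ (Real.exp (-L) * L^n / n.factorial) *
              (2 / Real.sqrt ((n:ℝ)+1) * Real.exp (-(k:ℝ)^2/(8*(L+1)))) := by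
              apply mul_le_mul_of_nonneg_left _ (hwnn n)
              exact mul_le_mul_of_nonneg_left hexp (by positivity)
          _ = (2 * Real.exp (-(k:ℝ)^2/(8*(L+1)))) *
              (Real.exp (-L) * L^n / n.factorial / Real.sqrt ((n:ℝ)+1)) := by ring
    calc ∑ n ∈ Finset.range T, (Real.exp (-L) * L^n / n.factorial) * p n k
        ≤ ∑ n ∈ Finset.range T, (2 * Real.exp (-(k:ℝ)^2/(8*(L+1)))) *
            (Real.exp (-L) * L^n / n.factorial / Real.sqrt ((n:ℝ)+1)) :=
          Finset.sum_le_sum hterm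
      _ = (2 * Real.exp (-(k:ℝ)^2/(8*(L+1)))) * ∑ n ∈ Finset.range T,
            (Real.exp (-L) * L^n / n.factorial / Real.sqrt ((n:ℝ)+1)) := by
          rw [Finset.mul_sum]
      _ ≤ (2 * Real.exp (-(k:ℝ)^2/(8*(L+1)))) *
            ∑' n : ℕ, (Real.exp (-L) * L^n / n.factorial / Real.sqrt ((n:ℝ)+1)) := by
          apply mul_le_mul_of_nonneg_left _ (by positivity)
          exact Summable.sum_le_tsum _ (fun n _ => by positivity) (summable_w_div_sqrt L hL)
      _ ≤ (2 * Real.exp (-(k:ℝ)^2/(8*(L+1)))) * (2/(Real.sqrt L + 1)) := by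
          apply mul_le_mul_of_nonneg_left (tsum_w_div_sqrt L hL) (by positivity)
      _ = 4 / (Real.sqrt L + 1) * Real.exp (-(k:ℝ)^2/(8*(L+1))) := by ring
  -- PART B
  have hB : ∑' n : ℕ, (Real.exp (-L) * L^(n+T) / (n+T).factorial) * p (n+T) k
      ≤ (2 / Real.sqrt ((T:ℝ)+1)) * (Real.exp L / 2^T) := by
    have hsum1 : Summable (fun n : ℕ => (Real.exp (-L) * L^(n+T) / (n+T).factorial) * p (n+T) k) :=
      (summable_nat_add_iff
        (f := fun n : ℕ => (Real.exp (-L) * L^n / n.factorial) * p n k) T).mpr hf_sum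
    have hsum2 : Summable (fun n : ℕ => (2 / Real.sqrt ((T:ℝ)+1)) *
        (Real.exp (-L) * L^(n+T) / (n+T).factorial)) :=
      (((summable_nat_add_iff
        (f := fun n : ℕ => Real.exp (-L) * L^n / n.factorial) T).mpr (summable_w L)).mul_left _)
    have hterm : ∀ n : ℕ, (Real.exp (-L) * L^(n+T) / (n+T).factorial) * p (n+T) k
        ≤ (2 / Real.sqrt ((T:ℝ)+1)) * (Real.exp (-L) * L^(n+T) / (n+T).factorial) := by
      intro n
      have hT1 : (0:ℝ) < Real.sqrt ((T:ℝ)+1) := Real.sqrt_pos.mpr (by positivity)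
      have hp : p (n+T) k ≤ 2 / Real.sqrt ((T:ℝ)+1) := by
        refine (p_le (n+T) k).trans ?_
        have h1 : Real.sqrt ((T:ℝ)+1) ≤ Real.sqrt (((n+T:ℕ):ℝ)+1) := by
          apply Real.sqrt_le_sqrt
          push_cast
          linarith [Nat.cast_nonneg (α := ℝ) n]
        have h2 : Real.exp (-(k:ℝ)^2/(4*(((n+T:ℕ):ℝ)+1))) ≤ 1 := by
          apply Real.exp_le_one_iff.mpr
          apply div_nonpos_of_nonpos_of_nonneg (by nlinarith [sq_nonneg ((k:ℝ))]) (by positivity)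
        calc 2 / Real.sqrt (((n+T:ℕ):ℝ)+1) * Real.exp (-(k:ℝ)^2/(4*(((n+T:ℕ):ℝ)+1)))
            ≤ 2 / Real.sqrt ((T:ℝ)+1) * 1 := by
              apply mul_le_mul _ h2 (Real.exp_nonneg _) (by positivity)
              exact div_le_div_of_nonneg_left (by norm_num) hT1 h1
          _ = 2 / Real.sqrt ((T:ℝ)+1) := mul_one _
      calc (Real.exp (-L) * L^(n+T) / (n+T).factorial) * p (n+T) k
          ≤ (Real.exp (-L) * L^(n+T) / (n+T).factorial) * (2 / Real.sqrt ((T:ℝ)+1)) :=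
            mul_le_mul_of_nonneg_left hp (hwnn (n+T))
        _ = (2 / Real.sqrt ((T:ℝ)+1)) * (Real.exp (-L) * L^(n+T) / (n+T).factorial) := by ring
    calc ∑' n : ℕ, (Real.exp (-L) * L^(n+T) / (n+T).factorial) * p (n+T) k
        ≤ ∑' n : ℕ, (2 / Real.sqrt ((T:ℝ)+1)) * (Real.exp (-L) * L^(n+T) / (n+T).factorial) :=
          Summable.tsum_le_tsum hterm hsum1 hsum2
      _ = (2 / Real.sqrt ((T:ℝ)+1)) * ∑' n : ℕ, (Real.exp (-L) * L^(n+T) / (n+T).factorial) :=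
          tsum_mul_left
      _ ≤ (2 / Real.sqrt ((T:ℝ)+1)) * (Real.exp L / 2^T) := by
          apply mul_le_mul_of_nonneg_left (tsum_w_tail L hL T) (by positivity)
  -- Facts about T
  have hT2L : 2*L ≤ (T:ℝ) := by
    have h1 : 2*L ≤ (Nat.ceil (2*L) : ℝ) := Nat.le_ceil _
    have h2 : (Nat.ceil (2*L) : ℝ) ≤ (T:ℝ) := by exact_mod_cast Nat.le_max_left _ _
    linarith
  have hTk : |(k:ℝ)| ≤ (T:ℝ) := by
    rw [habsk]
    exact_mod_cast Nat.le_max_right (Nat.ceil (2*L)) k.natAbs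
  -- prefactor comparison
  have hsqrtL : Real.sqrt L = Real.sqrt D * Real.sqrt s := Real.sqrt_mul hD.le s
  have hss : (0:ℝ) < Real.sqrt s + 1 := by positivity
  have hLL : (0:ℝ) < Real.sqrt L + 1 := by positivity
  have hpre : 1/(Real.sqrt L + 1) ≤ M/(Real.sqrt s + 1) := by
    rw [div_le_div_iff₀ hLL hss]
    have h1 : Real.sqrt s ≤ (M * Real.sqrt D) * Real.sqrt s :=
      le_mul_of_one_le_left (Real.sqrt_nonneg s) hMD
    rw [hsqrtL]
    nlinarith [Real.sqrt_nonneg s, Real.sqrt_nonneg D]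
  -- exponential comparisons
  have hEG : Real.exp (-(k:ℝ)^2/(8*(L+1))) ≤ G := by
    rw [hGdef]
    apply Real.exp_le_exp.mpr
    rw [neg_mul, neg_div, neg_div, neg_le_neg_iff]
    rcases eq_or_ne k 0 with rfl | hk0
    · simp
    · have hk1 : (1:ℝ) ≤ |(k:ℝ)| := by
        rw [habsk]
        have : 1 ≤ k.natAbs := by omega
        exact_mod_cast this
      have key : L + 1 ≤ c * (s + |(k:ℝ)|) := by
        have e1 : D * s ≤ c * s := mul_le_mul_of_nonneg_right hDc hs.le
        nlinarith [hk1, hc1, hs.le]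
      rw [div_le_div_iff₀ hsk (by positivity)]
      have hc0 : (0:ℝ) < c := by linarith
      have expand : 1/(8*c) * (k:ℝ)^2 * (8*(L+1)) = (k:ℝ)^2 * (L+1) / c := by
        field_simp
      rw [expand, div_le_iff₀ hc0]
      nlinarith [sq_nonneg ((k:ℝ)), key]
  have hBG : (2 / Real.sqrt ((T:ℝ)+1)) * (Real.exp L / 2^T)
      ≤ (2 * Real.sqrt 2) / (Real.sqrt L + 1) * G := by
    have hsqrt2 : (0:ℝ) < Real.sqrt 2 := Real.sqrt_pos.mpr (by norm_num)
    have hT1 : (0:ℝ) < Real.sqrt ((T:ℝ)+1) := Real.sqrt_pos.mpr (by positivity)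
    have b1 : 1/Real.sqrt ((T:ℝ)+1) ≤ Real.sqrt 2/(Real.sqrt L + 1) := by
      rw [div_le_div_iff₀ hT1 hLL]
      have heq : Real.sqrt 2 * Real.sqrt ((T:ℝ)+1) = Real.sqrt (2*((T:ℝ)+1)) :=
        (Real.sqrt_mul (by norm_num) _).symm
      rw [heq]
      rw [show Real.sqrt L + 1 = Real.sqrt L + 1 from rfl]
      apply (Real.le_sqrt (by positivity) (by positivity)).mpr
      have hsqL : (Real.sqrt L)^2 = L := Real.sq_sqrt hL.le
      nlinarith [sq_nonneg (Real.sqrt L - 1), hT2L, hsqL]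
    have b2 : Real.exp L / 2^T ≤ Real.exp (-((T:ℝ)/6)) := by
      have h2T : (2:ℝ)^T = Real.exp ((T:ℝ) * Real.log 2) := by
        rw [Real.exp_nat_mul, Real.exp_log (by norm_num)]
      rw [h2T, ← Real.exp_sub]
      apply Real.exp_le_exp.mpr
      have hlog := Real.log_two_gt_d9
      have hTnn : (0:ℝ) ≤ (T:ℝ) := Nat.cast_nonneg T
      nlinarith [hT2L]
    have b3 : Real.exp (-((T:ℝ)/6)) ≤ G := by
      rw [hGdef]
      apply Real.exp_le_exp.mpr
      have hk2 : (k:ℝ)^2 ≤ |(k:ℝ)| * (s + |(k:ℝ)|) := by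
        nlinarith [sq_abs ((k:ℝ)), abs_nonneg ((k:ℝ)), hs.le]
      have hc0 : (0:ℝ) < c := by linarith
      have key : (1/(8*c)) * (k:ℝ)^2 / (s + |(k:ℝ)|) ≤ |(k:ℝ)|/6 := by
        rw [div_le_div_iff₀ hsk (by norm_num)]
        have e : 1/(8*c) * (k:ℝ)^2 * 6 = (6/(8*c)) * (k:ℝ)^2 := by ring
        rw [e]
        have h68 : (6:ℝ)/(8*c) ≤ 1 := by
          rw [div_le_one (by positivity)]; linarith
        calc (6/(8*c)) * (k:ℝ)^2 ≤ 1 * (k:ℝ)^2 := mul_le_mul_of_nonneg_right h68 (sq_nonneg _)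
          _ = (k:ℝ)^2 := one_mul _
          _ ≤ |(k:ℝ)| * (s + |(k:ℝ)|) := hk2
      have heq2 : -(1/(8*c)) * (k:ℝ)^2 / (s + |(k:ℝ)|)
          = -((1/(8*c)) * (k:ℝ)^2 / (s + |(k:ℝ)|)) := by ring
      rw [heq2]
      have hTk6 : |(k:ℝ)|/6 ≤ (T:ℝ)/6 := by linarith
      linarith [key]
    calc (2 / Real.sqrt ((T:ℝ)+1)) * (Real.exp L / 2^T)
        ≤ (2 * (Real.sqrt 2/(Real.sqrt L + 1))) * Real.exp (-((T:ℝ)/6)) := by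
          apply mul_le_mul _ b2 (by positivity) (by positivity)
          calc (2:ℝ) / Real.sqrt ((T:ℝ)+1) = 2 * (1/Real.sqrt ((T:ℝ)+1)) := by ring
            _ ≤ 2 * (Real.sqrt 2/(Real.sqrt L + 1)) := by
                apply mul_le_mul_of_nonneg_left b1 (by norm_num)
      _ ≤ (2 * (Real.sqrt 2/(Real.sqrt L + 1))) * G := by
          apply mul_le_mul_of_nonneg_left b3 (by positivity)
      _ = (2 * Real.sqrt 2) / (Real.sqrt L + 1) * G := by ring
  -- combine
  have hsqrt2le : Real.sqrt 2 ≤ 2 := by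
    have h1 : Real.sqrt 2 ≤ Real.sqrt 4 := Real.sqrt_le_sqrt (by norm_num)
    have h2 : Real.sqrt 4 = 2 := by
      rw [show (4:ℝ) = 2^2 by norm_num]
      exact Real.sqrt_sq (by norm_num)
    linarith
  rw [halpha, ← hsplit]
  calc (∑ n ∈ Finset.range T, (Real.exp (-L) * L^n / n.factorial) * p n k)
        + ∑' n : ℕ, (Real.exp (-L) * L^(n+T) / (n+T).factorial) * p (n+T) k
      ≤ 4 / (Real.sqrt L + 1) * Real.exp (-(k:ℝ)^2/(8*(L+1)))
        + (2 / Real.sqrt ((T:ℝ)+1)) * (Real.exp L / 2^T) := add_le_add hA hB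
      _ ≤ 4 / (Real.sqrt L + 1) * G + (2 * Real.sqrt 2) / (Real.sqrt L + 1) * G := by
        apply add_le_add _ hBG
        apply mul_le_mul_of_nonneg_left hEG (by positivity)
      _ = (4 + 2 * Real.sqrt 2) * (1/(Real.sqrt L + 1)) * G := by ring
      _ ≤ (4 + 2 * Real.sqrt 2) * (M/(Real.sqrt s + 1)) * G := by
        apply mul_le_mul_of_nonneg_right _ hG0.le
        apply mul_le_mul_of_nonneg_left hpre (by positivity)
      _ ≤ 8 * M / (Real.sqrt s + 1) * G := by
        apply mul_le_mul_of_nonneg_right _ hG0.le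
        rw [show (8:ℝ) * M / (Real.sqrt s + 1) = 8 * (M/(Real.sqrt s + 1)) by ring]
        have h8 : (4:ℝ) + 2 * Real.sqrt 2 ≤ 8 := by nlinarith [hsqrt2le, Real.sqrt_nonneg 2]
        apply mul_le_mul_of_nonneg_right h8 (by positivity)
end

section
/- For every integer q ≥ 1 and every real D₁ > 0 there exists a constant D₃ < ∞, depending only on q and D₁, such that for every integer J ≥ 2q + 1 and all reals 0 < ℓ₁ ≤ ℓ₂ ≤ ⋯ ≤ ℓ_J, q · ∫_0^∞ u^{q−1} ∏_{j=1}^{J} min(1, D₁ ℓ_j/√u) du ≤ D₃ · ℓ₁ℓ₂⋯ℓ_{2q} · (1 + log(ℓ_{2q+1}/ℓ_{2q})). (The integral estimate (4.24) in the proof of Lemma 2, which bounds E{δ_k^q | H_k} given the tail bound P{δ_k > u | H_k} ≤ ∏_j min(1, D₁ℓ_j/√u).) -/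
open MeasureTheory

/-- The integral estimate (4.24) in the proof of Lemma 2:
`q ∫_0^∞ u^{q-1} ∏_{j=1}^J min(1, D₁ ℓ_j / √u) du
  ≤ D₃ ℓ₁⋯ℓ_{2q} (1 + log(ℓ_{2q+1}/ℓ_{2q}))`. -/
theorem integral_tail_bound (q : ℕ) (hq : 1 ≤ q) (D₁ : ℝ) (hD₁ : 0 < D₁) :
    ∃ D₃ : ℝ, ∀ J : ℕ, 2 * q + 1 ≤ J → ∀ ℓ : ℕ → ℝ,
      (∀ i, 1 ≤ i → i ≤ J → 0 < ℓ i) →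
      (∀ i j, 1 ≤ i → i ≤ j → j ≤ J → ℓ i ≤ ℓ j) →
      (q : ℝ) * ∫ u in Set.Ioi (0 : ℝ),
          u ^ (q - 1) * ∏ j ∈ Finset.Icc 1 J, min 1 (D₁ * ℓ j / Real.sqrt u) ≤
        D₃ * (∏ j ∈ Finset.Icc 1 (2 * q), ℓ j) *
          (1 + Real.log (ℓ (2 * q + 1) / ℓ (2 * q))) := by
  classical
  refine ⟨(q : ℝ) * (4 * q + 2) * D₁ ^ (2 * q), ?_⟩
  intro J hJ ℓ hpos hmono
  have h2q1 : 1 ≤ 2 * q := by omega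
  have h2qJ : 2 * q ≤ J := by omega
  set c : ℕ → ℝ := fun j => D₁ * ℓ j with hc_def
  have hc : ∀ j, 1 ≤ j → j ≤ J → 0 < c j := fun j h1 h2 => mul_pos hD₁ (hpos j h1 h2)
  have hcmono : ∀ i j, 1 ≤ i → i ≤ j → j ≤ J → c i ≤ c j := fun i j h1 h2 h3 =>
    mul_le_mul_of_nonneg_left (hmono i j h1 h2 h3) hD₁.le
  set t : ℕ → ℝ := fun k => if k = 0 then 0 else (c k) ^ 2 with ht_def
  have ht0 : t 0 = 0 := by simp [ht_def]
  have htval : ∀ k, k ≠ 0 → t k = (c k) ^ 2 := fun k hk => by simp [ht_def, hk]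
  have htpos : ∀ k, 1 ≤ k → k ≤ J → 0 < t k := by
    intro k h1 h2
    rw [htval k (by omega)]
    exact pow_pos (hc k h1 h2) 2
  have htnn : ∀ k, 0 ≤ t k := by
    intro k
    rcases Nat.eq_zero_or_pos k with h | h
    · simp [ht_def, h]
    · rw [htval k (by omega)]; exact sq_nonneg _
  set P : ℕ → ℝ := fun k => ∏ j ∈ Finset.Icc 1 k, c j with hP_def
  have hPpos : ∀ k, k ≤ J → 0 < P k := by
    intro k hk
    refine Finset.prod_pos ?_
    intro j hj
    rw [Finset.mem_Icc] at hj
    exact hc j hj.1 (le_trans hj.2 hk)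
  set G : ℕ → ℝ → ℝ := fun k u => P k * u ^ ((q : ℝ) - 1 - (k : ℝ) / 2) with hG_def
  have hIcc_succ : ∀ a b : ℕ, Finset.Icc (a + 1) b = Finset.Ioc a b := by
    intro a b; ext x; simp only [Finset.mem_Icc, Finset.mem_Ioc]; omega
  have hIccIoc : ∀ n : ℕ, Finset.Icc 1 n = Finset.Ioc 0 n := fun n => hIcc_succ 0 n
  -- key pointwise bound
  have key : ∀ u : ℝ, 0 < u → ∀ k : ℕ, k ≤ J →
      u ^ (q - 1) * ∏ j ∈ Finset.Icc 1 J, min 1 (c j / Real.sqrt u) ≤ G k u := by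
    intro u hu k hk
    have hsu : 0 < Real.sqrt u := Real.sqrt_pos.2 hu
    have hm0 : ∀ j, 1 ≤ j → j ≤ J → 0 ≤ min 1 (c j / Real.sqrt u) :=
      fun j h1 h2 => le_min zero_le_one (div_nonneg (hc j h1 h2).le hsu.le)
    have hsplit : ∏ j ∈ Finset.Icc 1 J, min 1 (c j / Real.sqrt u) =
        (∏ j ∈ Finset.Icc 1 k, min 1 (c j / Real.sqrt u)) *
          ∏ j ∈ Finset.Ioc k J, min 1 (c j / Real.sqrt u) := by
      rw [hIccIoc J, hIccIoc k]
      exact (Finset.prod_Ioc_consecutive _ (Nat.zero_le k) hk).symm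
    have h1 : (∏ j ∈ Finset.Icc 1 k, min 1 (c j / Real.sqrt u)) ≤
        ∏ j ∈ Finset.Icc 1 k, (c j / Real.sqrt u) := by
      refine Finset.prod_le_prod ?_ ?_
      · intro j hj; rw [Finset.mem_Icc] at hj; exact hm0 j hj.1 (le_trans hj.2 hk)
      · intro j hj; exact min_le_right _ _
    have h2 : (∏ j ∈ Finset.Ioc k J, min 1 (c j / Real.sqrt u)) ≤ 1 := by
      refine Finset.prod_le_one ?_ ?_
      · intro j hj; rw [Finset.mem_Ioc] at hj; exact hm0 j (by omega) hj.2
      · intro j hj; exact min_le_left _ _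
    have h2' : 0 ≤ ∏ j ∈ Finset.Ioc k J, min 1 (c j / Real.sqrt u) := by
      refine Finset.prod_nonneg ?_
      intro j hj; rw [Finset.mem_Ioc] at hj; exact hm0 j (by omega) hj.2
    have h1' : 0 ≤ ∏ j ∈ Finset.Icc 1 k, min 1 (c j / Real.sqrt u) := by
      refine Finset.prod_nonneg ?_
      intro j hj; rw [Finset.mem_Icc] at hj; exact hm0 j hj.1 (le_trans hj.2 hk)
    have h3 : ∏ j ∈ Finset.Icc 1 k, (c j / Real.sqrt u) = P k / Real.sqrt u ^ k := by
      rw [Finset.prod_div_distrib, Finset.prod_const, Nat.card_Icc]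
      simp [hP_def]
    have e1 : u ^ (q - 1) = u ^ ((q : ℝ) - 1) := by
      rw [← Real.rpow_natCast u (q - 1), Nat.cast_sub hq, Nat.cast_one]
    have e2 : Real.sqrt u ^ k = u ^ ((k : ℝ) / 2) := by
      rw [Real.sqrt_eq_rpow, ← Real.rpow_natCast (u ^ (1 / 2 : ℝ)) k, ← Real.rpow_mul hu.le,
        show (1 / 2 : ℝ) * (k : ℝ) = (k : ℝ) / 2 by ring]
    calc u ^ (q - 1) * ∏ j ∈ Finset.Icc 1 J, min 1 (c j / Real.sqrt u)
        ≤ u ^ (q - 1) * ((∏ j ∈ Finset.Icc 1 k, (c j / Real.sqrt u)) * 1) := by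
          rw [hsplit]
          refine mul_le_mul_of_nonneg_left ?_ (pow_nonneg hu.le _)
          exact mul_le_mul h1 h2 h2' (le_trans h1' h1)
      _ = G k u := by
          show u ^ (q - 1) * ((∏ j ∈ Finset.Icc 1 k, (c j / Real.sqrt u)) * 1) =
            P k * u ^ ((q : ℝ) - 1 - (k : ℝ) / 2)
          rw [mul_one, h3, e1, e2, Real.rpow_sub hu ((q : ℝ) - 1) ((k : ℝ) / 2)]
          ring
  -- regions
  set R : ℕ → Set ℝ := fun k => Set.Ioc (t k) (t (k + 1)) with hR_def
  have hRsub : ∀ k, R k ⊆ Set.Ioi (0 : ℝ) := fun k u hu => lt_of_le_of_lt (htnn k) hu.1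
  have hGnn : ∀ k, k ≤ J → ∀ u : ℝ, 0 < u → 0 ≤ G k u := fun k hk u hu =>
    mul_nonneg (hPpos k hk).le (Real.rpow_nonneg hu.le _)
  set h : ℝ → ℝ := fun u =>
    (∑ k ∈ Finset.range (2 * q + 1), (R k).indicator (G k) u) +
      (Set.Ioi (t (2 * q + 1))).indicator (G (2 * q + 1)) u with hh_def
  -- pointwise f ≤ h on Ioi 0
  have hfh : ∀ u : ℝ, 0 < u →
      u ^ (q - 1) * ∏ j ∈ Finset.Icc 1 J, min 1 (c j / Real.sqrt u) ≤ h u := by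
    intro u hu
    have hsum_nn : ∀ k ∈ Finset.range (2 * q + 1), 0 ≤ (R k).indicator (G k) u := by
      intro k hk
      rw [Finset.mem_range] at hk
      exact Set.indicator_nonneg (fun x hx => hGnn k (by omega) x (hRsub k hx)) u
    have htop_nn : 0 ≤ (Set.Ioi (t (2 * q + 1))).indicator (G (2 * q + 1)) u :=
      Set.indicator_nonneg (fun x hx => hGnn _ (by omega) x (lt_of_le_of_lt (htnn _) hx)) u
    by_cases hcase : t (2 * q + 1) < u
    · calc u ^ (q - 1) * ∏ j ∈ Finset.Icc 1 J, min 1 (c j / Real.sqrt u)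
          ≤ G (2 * q + 1) u := key u hu _ (by omega)
        _ = (Set.Ioi (t (2 * q + 1))).indicator (G (2 * q + 1)) u :=
            (Set.indicator_of_mem hcase _).symm
        _ ≤ h u := le_add_of_nonneg_left (Finset.sum_nonneg hsum_nn)
    · push_neg at hcase
      have hex : ∃ k, k ≤ 2 * q ∧ t k < u ∧ u ≤ t (k + 1) := by
        refine ⟨Nat.findGreatest (fun m => t m < u) (2 * q), Nat.findGreatest_le _, ?_, ?_⟩
        · exact Nat.findGreatest_spec (P := fun m => t m < u) (Nat.zero_le _) (show t 0 < u by rw [ht0]; exact hu)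
        · rcases Nat.lt_or_ge (Nat.findGreatest (fun m => t m < u) (2 * q)) (2 * q) with hlt | hge
          · by_contra h'
            push_neg at h'
            exact absurd h' (Nat.findGreatest_is_greatest (Nat.lt_succ_self _) hlt)
          · have heq : Nat.findGreatest (fun m => t m < u) (2 * q) = 2 * q :=
              le_antisymm (Nat.findGreatest_le _) hge
            rw [heq]; exact hcase
      obtain ⟨k, hk2, hk1, hk3⟩ := hex
      have hmem : u ∈ R k := ⟨hk1, hk3⟩
      calc u ^ (q - 1) * ∏ j ∈ Finset.Icc 1 J, min 1 (c j / Real.sqrt u)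
          ≤ G k u := key u hu k (by omega)
        _ = (R k).indicator (G k) u := (Set.indicator_of_mem hmem _).symm
        _ ≤ ∑ k ∈ Finset.range (2 * q + 1), (R k).indicator (G k) u :=
            Finset.single_le_sum hsum_nn (Finset.mem_range.2 (by omega))
        _ ≤ h u := le_add_of_nonneg_right htop_nn
  -- integrability on pieces
  have hint : ∀ k, k ≤ 2 * q → IntegrableOn (G k) (R k) := by
    intro k hk
    rcases Nat.lt_or_ge k (2 * q) with hlt | hge
    · have hkr : (k : ℝ) + 1 ≤ 2 * (q : ℝ) := by exact_mod_cast hlt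
      have he : (-1 : ℝ) < (q : ℝ) - 1 - (k : ℝ) / 2 := by linarith
      have h1 : IntegrableOn (fun u : ℝ => u ^ ((q : ℝ) - 1 - (k : ℝ) / 2))
          (Set.Ioc 0 (t (k + 1))) := by
        rw [← intervalIntegrable_iff_integrableOn_Ioc_of_le (htnn (k + 1))]
        exact intervalIntegral.intervalIntegrable_rpow' he
      simp only [hG_def, hR_def]
      exact (h1.mono_set (Set.Ioc_subset_Ioc_left (htnn k))).const_mul (P k)
    · have hkeq : k = 2 * q := le_antisymm hk hge
      have htk : 0 < t k := htpos k (by omega) (by omega)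
      have hcont : ContinuousOn (fun u : ℝ => u ^ ((q : ℝ) - 1 - (k : ℝ) / 2))
          (Set.Icc (t k) (t (k + 1))) := by
        intro x hx
        exact (Real.continuousAt_rpow_const x _
          (Or.inl (ne_of_gt (lt_of_lt_of_le htk hx.1)))).continuousWithinAt
      simp only [hG_def, hR_def]
      exact (hcont.integrableOn_Icc.mono_set Set.Ioc_subset_Icc_self).const_mul (P k)
  have hinttop : IntegrableOn (G (2 * q + 1)) (Set.Ioi (t (2 * q + 1))) := by
    have he : ((q : ℝ) - 1 - ((2 * q + 1 : ℕ) : ℝ) / 2) = -(3 / 2) := by push_cast; ring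
    have h1 := integrableOn_Ioi_rpow_of_lt (show (-(3 / 2) : ℝ) < -1 by norm_num)
      (htpos (2 * q + 1) (by omega) hJ)
    simp only [hG_def, he]
    exact h1.const_mul _
  -- value of pieces, k < 2q
  have hval : ∀ k, k < 2 * q → ∫ u in R k, G k u ≤ 2 * P (2 * q) := by
    intro k hk
    have hkJ : k ≤ J := by omega
    have hkr : (k : ℝ) + 1 ≤ 2 * (q : ℝ) := by exact_mod_cast hk
    have he : (-1 : ℝ) < (q : ℝ) - 1 - (k : ℝ) / 2 := by linarith
    have he2 : (0 : ℝ) < (q : ℝ) - (k : ℝ) / 2 := by linarith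
    have he2' : (1 / 2 : ℝ) ≤ (q : ℝ) - (k : ℝ) / 2 := by linarith
    have hck : 0 < c (k + 1) := hc (k + 1) (by omega) (by omega)
    have hbig : IntegrableOn (fun u : ℝ => u ^ ((q : ℝ) - 1 - (k : ℝ) / 2))
        (Set.Ioc 0 (t (k + 1))) := by
      rw [← intervalIntegrable_iff_integrableOn_Ioc_of_le (htnn (k + 1))]
      exact intervalIntegral.intervalIntegrable_rpow' he
    have h2 : ∫ u in R k, (u : ℝ) ^ ((q : ℝ) - 1 - (k : ℝ) / 2) ≤
        ∫ u in Set.Ioc (0 : ℝ) (t (k + 1)), u ^ ((q : ℝ) - 1 - (k : ℝ) / 2) := by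
      refine setIntegral_mono_set hbig ?_ ?_
      · refine (ae_restrict_iff' measurableSet_Ioc).2 (Filter.Eventually.of_forall ?_)
        intro x hx
        exact Real.rpow_nonneg hx.1.le _
      · exact (Set.Ioc_subset_Ioc_left (htnn k)).eventuallyLE
    have h3 : ∫ u in Set.Ioc (0 : ℝ) (t (k + 1)), u ^ ((q : ℝ) - 1 - (k : ℝ) / 2) =
        t (k + 1) ^ ((q : ℝ) - (k : ℝ) / 2) / ((q : ℝ) - (k : ℝ) / 2) := by
      rw [← intervalIntegral.integral_of_le (htnn (k + 1)), integral_rpow (Or.inl he),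
        show ((q : ℝ) - 1 - (k : ℝ) / 2) + 1 = (q : ℝ) - (k : ℝ) / 2 by ring,
        Real.zero_rpow (by linarith : ((q : ℝ) - (k : ℝ) / 2) ≠ 0), sub_zero]
    have hT : t (k + 1) ^ ((q : ℝ) - (k : ℝ) / 2) = c (k + 1) ^ (2 * q - k) := by
      rw [htval (k + 1) (Nat.succ_ne_zero k), ← Real.rpow_natCast (c (k + 1)) 2,
        ← Real.rpow_mul hck.le,
        show ((2 : ℕ) : ℝ) * ((q : ℝ) - (k : ℝ) / 2) = ((2 * q - k : ℕ) : ℝ) by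
          rw [Nat.cast_sub (show k ≤ 2 * q by omega)]; push_cast; ring,
        Real.rpow_natCast]
    have hTle : c (k + 1) ^ (2 * q - k) ≤ ∏ j ∈ Finset.Icc (k + 1) (2 * q), c j := by
      have hle : ∏ j ∈ Finset.Icc (k + 1) (2 * q), c (k + 1) ≤
          ∏ j ∈ Finset.Icc (k + 1) (2 * q), c j := by
        refine Finset.prod_le_prod (fun j hj => hck.le) ?_
        intro j hj
        rw [Finset.mem_Icc] at hj
        exact hcmono (k + 1) j (by omega) hj.1 (le_trans hj.2 h2qJ)
      rw [Finset.prod_const, Nat.card_Icc] at hle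
      rwa [show 2 * q + 1 - (k + 1) = 2 * q - k from by omega] at hle
    have hPsplit : P k * ∏ j ∈ Finset.Icc (k + 1) (2 * q), c j = P (2 * q) := by
      rw [hP_def]
      simp only
      rw [hIccIoc k, hIccIoc (2 * q), hIcc_succ k (2 * q)]
      exact Finset.prod_Ioc_consecutive c (Nat.zero_le k) (by omega)
    have hE : c (k + 1) ^ (2 * q - k) / ((q : ℝ) - (k : ℝ) / 2) ≤ 2 * c (k + 1) ^ (2 * q - k) := by
      rw [div_le_iff₀ he2]
      nlinarith [pow_nonneg hck.le (2 * q - k)]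
    have hGval : ∫ u in R k, G k u = P k * ∫ u in R k, (u : ℝ) ^ ((q : ℝ) - 1 - (k : ℝ) / 2) := by
      simp only [hG_def]
      rw [integral_const_mul]
    calc ∫ u in R k, G k u
        = P k * ∫ u in R k, (u : ℝ) ^ ((q : ℝ) - 1 - (k : ℝ) / 2) := hGval
      _ ≤ P k * (t (k + 1) ^ ((q : ℝ) - (k : ℝ) / 2) / ((q : ℝ) - (k : ℝ) / 2)) := by
          refine mul_le_mul_of_nonneg_left ?_ (hPpos k hkJ).le
          rw [← h3]; exact h2
      _ = P k * (c (k + 1) ^ (2 * q - k) / ((q : ℝ) - (k : ℝ) / 2)) := by rw [hT]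
      _ ≤ P k * (2 * c (k + 1) ^ (2 * q - k)) := mul_le_mul_of_nonneg_left hE (hPpos k hkJ).le
      _ = 2 * (P k * c (k + 1) ^ (2 * q - k)) := by ring
      _ ≤ 2 * (P k * ∏ j ∈ Finset.Icc (k + 1) (2 * q), c j) := by
          refine mul_le_mul_of_nonneg_left ?_ (by norm_num)
          exact mul_le_mul_of_nonneg_left hTle (hPpos k hkJ).le
      _ = 2 * P (2 * q) := by rw [hPsplit]
  -- value of piece k = 2q
  have hval2 : ∫ u in R (2 * q), G (2 * q) u =
      P (2 * q) * (2 * Real.log (ℓ (2 * q + 1) / ℓ (2 * q))) := by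
    have hea : ((q : ℝ) - 1 - ((2 * q : ℕ) : ℝ) / 2) = -1 := by push_cast; ring
    have ha : 0 < t (2 * q) := htpos _ (by omega) (by omega)
    have hab : t (2 * q) ≤ t (2 * q + 1) := by
      rw [htval (2 * q) (by omega), htval (2 * q + 1) (by omega)]
      have h1 := hc (2 * q) (by omega) (by omega)
      have h2 := hcmono (2 * q) (2 * q + 1) (by omega) (by omega) hJ
      nlinarith
    simp only [hG_def, hR_def, hea]
    rw [integral_const_mul]
    congr 1
    rw [← intervalIntegral.integral_of_le hab]
    simp_rw [Real.rpow_neg_one]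
    rw [integral_inv (Set.notMem_uIcc_of_lt ha (lt_of_lt_of_le ha hab))]
    have hratio : t (2 * q + 1) / t (2 * q) = (ℓ (2 * q + 1) / ℓ (2 * q)) ^ 2 := by
      rw [htval (2 * q) (by omega), htval (2 * q + 1) (by omega), hc_def]
      simp only
      have hl1 : ℓ (2 * q) ≠ 0 := (hpos (2 * q) (by omega) (by omega)).ne'
      field_simp
    rw [hratio, Real.log_pow]
    push_cast
    ring
  -- value of top piece
  have hvaltop : ∫ u in Set.Ioi (t (2 * q + 1)), G (2 * q + 1) u = 2 * P (2 * q) := by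
    have hea : ((q : ℝ) - 1 - ((2 * q + 1 : ℕ) : ℝ) / 2) = -(3 / 2) := by push_cast; ring
    have hT : 0 < t (2 * q + 1) := htpos _ (by omega) hJ
    have hcx : 0 < c (2 * q + 1) := hc _ (by omega) hJ
    simp only [hG_def, hea]
    rw [integral_const_mul, integral_Ioi_rpow_of_lt (by norm_num) hT]
    have h1 : t (2 * q + 1) ^ ((-(3 / 2) : ℝ) + 1) = (c (2 * q + 1))⁻¹ := by
      rw [htval (2 * q + 1) (by omega), ← Real.rpow_natCast (c (2 * q + 1)) 2,
        ← Real.rpow_mul hcx.le,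
        show ((2 : ℕ) : ℝ) * ((-(3 / 2) : ℝ) + 1) = -1 by push_cast; norm_num, Real.rpow_neg_one]
    have hP1 : P (2 * q + 1) = P (2 * q) * c (2 * q + 1) := by
      rw [hP_def]
      simp only
      exact Finset.prod_Icc_succ_top (by omega) c
    rw [h1, hP1]
    field_simp
    ring
  -- assembling
  have hmeasR : ∀ k : ℕ, MeasurableSet (R k) := fun k => measurableSet_Ioc
  have hintind : ∀ k ∈ Finset.range (2 * q + 1),
      Integrable ((R k).indicator (G k)) (volume.restrict (Set.Ioi (0 : ℝ))) := by
    intro k hk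
    rw [Finset.mem_range] at hk
    exact ((hint k (by omega)).integrable_indicator (hmeasR k)).integrableOn
  have hinttopind : Integrable ((Set.Ioi (t (2 * q + 1))).indicator (G (2 * q + 1)))
      (volume.restrict (Set.Ioi (0 : ℝ))) :=
    (hinttop.integrable_indicator measurableSet_Ioi).integrableOn
  have hh_int : Integrable h (volume.restrict (Set.Ioi (0 : ℝ))) := by
    rw [hh_def]
    exact (integrable_finset_sum _ hintind).add hinttopind
  have hbound : (∫ u in Set.Ioi (0 : ℝ),
      u ^ (q - 1) * ∏ j ∈ Finset.Icc 1 J, min 1 (c j / Real.sqrt u)) ≤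
      ∫ u in Set.Ioi (0 : ℝ), h u := by
    refine integral_mono_of_nonneg ?_ hh_int ?_
    · refine (ae_restrict_iff' measurableSet_Ioi).2 (Filter.Eventually.of_forall ?_)
      intro u hu
      rw [Set.mem_Ioi] at hu
      have hsu : 0 < Real.sqrt u := Real.sqrt_pos.2 hu
      refine mul_nonneg (pow_nonneg hu.le _) (Finset.prod_nonneg ?_)
      intro j hj
      rw [Finset.mem_Icc] at hj
      exact le_min zero_le_one (div_nonneg (hc j hj.1 hj.2).le hsu.le)
    · refine (ae_restrict_iff' measurableSet_Ioi).2 (Filter.Eventually.of_forall ?_)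
      intro u hu
      rw [Set.mem_Ioi] at hu
      exact hfh u hu
  have hcomp : (∫ u in Set.Ioi (0 : ℝ), h u) =
      (∑ k ∈ Finset.range (2 * q + 1), ∫ u in R k, G k u) +
        ∫ u in Set.Ioi (t (2 * q + 1)), G (2 * q + 1) u := by
    rw [hh_def]
    rw [integral_add (integrable_finset_sum _ hintind) hinttopind,
      integral_finset_sum _ hintind]
    congr 1
    · refine Finset.sum_congr rfl fun k hk => ?_
      rw [setIntegral_indicator (hmeasR k), Set.inter_eq_self_of_subset_right (hRsub k)]
    · rw [setIntegral_indicator measurableSet_Ioi,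
        Set.inter_eq_self_of_subset_right (Set.Ioi_subset_Ioi (htnn (2 * q + 1)))]
  set L := Real.log (ℓ (2 * q + 1) / ℓ (2 * q)) with hL_def
  have hLnn : 0 ≤ L :=
    Real.log_nonneg ((one_le_div (hpos (2 * q) (by omega) (by omega))).2
      (hmono (2 * q) (2 * q + 1) (by omega) (by omega) hJ))
  have hsum : (∑ k ∈ Finset.range (2 * q + 1), ∫ u in R k, G k u) ≤
      (2 * q : ℕ) * (2 * P (2 * q)) + P (2 * q) * (2 * L) := by
    rw [Finset.sum_range_succ, hval2]
    have hs1 : ∑ k ∈ Finset.range (2 * q), ∫ u in R k, G k u ≤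
        ∑ _k ∈ Finset.range (2 * q), 2 * P (2 * q) :=
      Finset.sum_le_sum fun k hk => hval k (Finset.mem_range.1 hk)
    rw [Finset.sum_const, Finset.card_range, nsmul_eq_mul] at hs1
    linarith
  have htotal : (∫ u in Set.Ioi (0 : ℝ),
      u ^ (q - 1) * ∏ j ∈ Finset.Icc 1 J, min 1 (c j / Real.sqrt u)) ≤
      ((2 * q : ℕ) : ℝ) * (2 * P (2 * q)) + P (2 * q) * (2 * L) + 2 * P (2 * q) := by
    calc (∫ u in Set.Ioi (0 : ℝ),
        u ^ (q - 1) * ∏ j ∈ Finset.Icc 1 J, min 1 (c j / Real.sqrt u))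
        ≤ ∫ u in Set.Ioi (0 : ℝ), h u := hbound
      _ = (∑ k ∈ Finset.range (2 * q + 1), ∫ u in R k, G k u) +
          ∫ u in Set.Ioi (t (2 * q + 1)), G (2 * q + 1) u := hcomp
      _ ≤ ((2 * q : ℕ) : ℝ) * (2 * P (2 * q)) + P (2 * q) * (2 * L) + 2 * P (2 * q) := by
          rw [hvaltop]; linarith [hsum]
  have hP2q : P (2 * q) = D₁ ^ (2 * q) * ∏ j ∈ Finset.Icc 1 (2 * q), ℓ j := by
    rw [hP_def, hc_def]
    simp only
    rw [Finset.prod_mul_distrib, Finset.prod_const, Nat.card_Icc]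
    simp
  have hprodpos : 0 < ∏ j ∈ Finset.Icc 1 (2 * q), ℓ j := by
    refine Finset.prod_pos ?_
    intro j hj
    rw [Finset.mem_Icc] at hj
    exact hpos j hj.1 (by omega)
  have hgoal : (q : ℝ) * ((2 * q : ℕ) * (2 * P (2 * q)) + P (2 * q) * (2 * L) + 2 * P (2 * q)) ≤
      (q : ℝ) * (4 * q + 2) * D₁ ^ (2 * q) * (∏ j ∈ Finset.Icc 1 (2 * q), ℓ j) * (1 + L) := by
    rw [hP2q]
    have hqr : (1 : ℝ) ≤ (q : ℝ) := by exact_mod_cast hq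
    have hDpow : (0 : ℝ) < D₁ ^ (2 * q) := pow_pos hD₁ _
    push_cast
    nlinarith [mul_pos hDpow hprodpos, mul_nonneg (mul_pos hDpow hprodpos).le hLnn,
      mul_nonneg (mul_nonneg (le_trans zero_le_one hqr) (mul_pos hDpow hprodpos).le) hLnn]
  calc (q : ℝ) * ∫ u in Set.Ioi (0 : ℝ),
      u ^ (q - 1) * ∏ j ∈ Finset.Icc 1 J, min 1 (D₁ * ℓ j / Real.sqrt u)
      ≤ (q : ℝ) * ((2 * q : ℕ) * (2 * P (2 * q)) + P (2 * q) * (2 * L) + 2 * P (2 * q)) :=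
        mul_le_mul_of_nonneg_left htotal (Nat.cast_nonneg q)
    _ ≤ (q : ℝ) * (4 * q + 2) * D₁ ^ (2 * q) * (∏ j ∈ Finset.Icc 1 (2 * q), ℓ j) * (1 + L) := hgoal
end

section
/- Let q ≥ 1 be an integer and D₁ > 0, D₄ ≥ 1 be reals. There exists a constant D₆ < ∞, depending only on q, D₁ and D₄, with the following property. Let 0 < f < 1, 0 < ζ ≤ 1, let J ≥ 8q + 2 be an integer, and let 0 < ℓ₁ ≤ ⋯ ≤ ℓ_J be reals with ℓ_{2q−1} ≤ ζ ℓ_{2q} and ℓ_j ≤ D₄ ℓ_{2q} for all 1 ≤ j ≤ ⌊J/2⌋. Suppose g : (0,∞) → [0,1] satisfies, for every u > 0, g(u) ≤ ∏_{j=1}^{⌊J/2⌋} m_j(u), where m_j(u) = min(1, D₁ℓ_j/√u) when u < (ζ D₁ ℓ_{2q})² and m_j(u) = min(1 − f, D₁ℓ_j/√u) when u ≥ (ζ D₁ ℓ_{2q})². Then q · ∫_0^∞ u^{q−1} g(u) du ≤ D₆ · ℓ₁⋯ℓ_{2q} · [ζ + (1−f)^{⌊J/2⌋ − 2q + 1}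 + J^{−1}]. (The refined integral estimate (4.29) in the proof of Lemma 2.) -/
set_option maxHeartbeats 1000000
open MeasureTheory Set

lemma sqrt_pow_helper (v : ℝ) (hv : 0 ≤ v) (m : ℕ) :
    Real.sqrt v ^ m = v ^ ((m : ℝ)/2) := by
  rw [Real.sqrt_eq_rpow, ← Real.rpow_natCast (v ^ ((1:ℝ)/2)) m, ← Real.rpow_mul hv]
  ring_nf

lemma alg_helper (P C u : ℝ) (hu : 0 < u) (q n : ℕ) (hq1 : 1 ≤ q) :
    u ^ (q-1) * (P / Real.sqrt u ^ (2*q) * (C / Real.sqrt u)^n)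
      = (P * C^n) * u ^ (-1 - (n:ℝ)/2) := by
  rw [div_pow, sqrt_pow_helper u hu.le (2*q), sqrt_pow_helper u hu.le n,
    ← Real.rpow_natCast u (q-1), div_mul_div_comm, ← Real.rpow_add hu, div_eq_mul_inv,
    ← Real.rpow_neg hu.le, mul_comm (u ^ (((q-1:ℕ)):ℝ)), mul_assoc, ← Real.rpow_add hu]
  congr 1
  push_cast [Nat.cast_sub hq1]
  ring

lemma div_sqrt_eq_rpow (c u : ℝ) (hu : 0 < u) :
    c / Real.sqrt u = c * u ^ (-(1/2) : ℝ) := by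
  rw [Real.rpow_neg hu.le, ← Real.sqrt_eq_rpow, div_eq_mul_inv]

lemma lemA (c X : ℝ) (hc : 0 < c) (hX : 0 ≤ X) :
    ∫ u in Set.Ioc 0 X, min 1 (c / Real.sqrt u) ≤ c^2 + 2*c*Real.sqrt X := by
  have hrint : IntegrableOn (fun u : ℝ => c * u ^ (-(1/2) : ℝ)) (Set.Ioc 0 X) := by
    have := (intervalIntegral.intervalIntegrable_rpow' (a := 0) (b := X)
      (r := -(1/2)) (by norm_num))
    exact ((intervalIntegrable_iff_integrableOn_Ioc_of_le hX).mp this).const_mul c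
  have hvol : volume (Set.Ioc (0:ℝ) X) ≠ ⊤ := by
    simp [Real.volume_Ioc]
  have hind : IntegrableOn (fun u : ℝ => (Set.Ioc (0:ℝ) (c^2)).indicator (fun _ => (1:ℝ)) u)
      (Set.Ioc 0 X) := by
    apply Integrable.integrableOn
    apply (integrable_indicator_iff measurableSet_Ioc).mpr
    exact integrableOn_const (by simp [Real.volume_Ioc])
  have hmono : ∫ u in Set.Ioc 0 X, min 1 (c / Real.sqrt u) ≤
      ∫ u in Set.Ioc 0 X, ((Set.Ioc (0:ℝ) (c^2)).indicator (fun _ => (1:ℝ)) u + c * u ^ (-(1/2) : ℝ)) := by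
    apply setIntegral_mono_on
    · apply Measure.integrableOn_of_bounded (M := 1) hvol
      · exact (measurable_const.min ((measurable_const.div (Real.continuous_sqrt.measurable)))).aestronglyMeasurable
      · filter_upwards with u
        rw [Real.norm_eq_abs, abs_le]
        constructor
        · have : (0:ℝ) ≤ min 1 (c / Real.sqrt u) := le_min one_pos.le (div_nonneg hc.le (Real.sqrt_nonneg u))
          linarith
        · exact min_le_left _ _
    · exact hind.add hrint
    · exact measurableSet_Ioc
    · intro u hu
      rcases le_or_gt u (c^2) with h | h
      · have h1 : (Set.Ioc (0:ℝ) (c^2)).indicator (fun _ => (1:ℝ)) u = 1 :=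
          Set.indicator_of_mem (show u ∈ Set.Ioc (0:ℝ) (c^2) from ⟨hu.1, h⟩) _
        rw [h1]
        have h2 : (0:ℝ) ≤ c * u ^ (-(1/2) : ℝ) := by
          have := Real.rpow_nonneg hu.1.le (-(1/2) : ℝ)
          positivity
        have hm : min 1 (c / Real.sqrt u) ≤ 1 := min_le_left _ _
        linarith
      · have hind0 : (Set.Ioc (0:ℝ) (c^2)).indicator (fun _ => (1:ℝ)) u = 0 := by
          rw [Set.indicator_of_notMem (by simp [not_and_or]; intro _; linarith)]
        rw [hind0, zero_add, ← div_sqrt_eq_rpow c u hu.1]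
        exact min_le_right _ _
  have heq : ∫ u in Set.Ioc 0 X, ((Set.Ioc (0:ℝ) (c^2)).indicator (fun _ => (1:ℝ)) u + c * u ^ (-(1/2) : ℝ))
      = (∫ u in Set.Ioc 0 X, (Set.Ioc (0:ℝ) (c^2)).indicator (fun _ => (1:ℝ)) u)
        + ∫ u in Set.Ioc 0 X, c * u ^ (-(1/2) : ℝ) := integral_add hind hrint
  have hindval : (∫ u in Set.Ioc 0 X, (Set.Ioc (0:ℝ) (c^2)).indicator (fun _ => (1:ℝ)) u) ≤ c^2 := by
    rw [setIntegral_indicator measurableSet_Ioc]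
    rw [setIntegral_const]
    simp only [smul_eq_mul, mul_one]
    calc (volume (Set.Ioc 0 X ∩ Set.Ioc 0 (c^2))).toReal
        ≤ (volume (Set.Ioc (0:ℝ) (c^2))).toReal := by
          apply ENNReal.toReal_mono (by simp [Real.volume_Ioc])
          exact measure_mono inter_subset_right
      _ ≤ c^2 := by
          rw [Real.volume_Ioc]
          rw [ENNReal.toReal_ofReal (by nlinarith : (0:ℝ) ≤ c^2 - 0)]
          linarith
  have hrval : (∫ u in Set.Ioc 0 X, c * u ^ (-(1/2) : ℝ)) = 2*c*Real.sqrt X := by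
    rw [integral_const_mul]
    rw [← intervalIntegral.integral_of_le hX]
    rw [integral_rpow (Or.inl (by norm_num))]
    rw [Real.zero_rpow (by norm_num)]
    rw [show (-(1/2) : ℝ) + 1 = 1/2 by norm_num, ← Real.sqrt_eq_rpow]
    ring
  calc ∫ u in Set.Ioc 0 X, min 1 (c / Real.sqrt u) ≤ _ := hmono
    _ = _ := heq
    _ ≤ c^2 + 2*c*Real.sqrt X := by rw [hrval]; linarith

/-- The refined integral estimate (4.29) in the proof of Lemma 2. -/
theorem refined_integral_bound (q : ℕ) (hq : 1 ≤ q) (D₁ D₄ : ℝ)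
    (hD₁ : 0 < D₁) (hD₄ : 1 ≤ D₄) :
    ∃ D₆ : ℝ, ∀ f ζ : ℝ, 0 < f → f < 1 → 0 < ζ → ζ ≤ 1 →
      ∀ J : ℕ, 8 * q + 2 ≤ J →
      ∀ ℓ : ℕ → ℝ,
        (∀ i, 1 ≤ i → i ≤ J → 0 < ℓ i) →
        (∀ i j, 1 ≤ i → i ≤ j → j ≤ J → ℓ i ≤ ℓ j) →
        ℓ (2 * q - 1) ≤ ζ * ℓ (2 * q) →
        (∀ j, 1 ≤ j → j ≤ J / 2 → ℓ j ≤ D₄ * ℓ (2 * q)) →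
      ∀ g : ℝ → ℝ, Measurable g →
        (∀ u, 0 < u → 0 ≤ g u ∧ g u ≤ 1) →
        (∀ u, 0 < u → g u ≤ ∏ j ∈ Finset.Icc 1 (J / 2),
          if u < (ζ * D₁ * ℓ (2 * q)) ^ 2 then min 1 (D₁ * ℓ j / Real.sqrt u)
          else min (1 - f) (D₁ * ℓ j / Real.sqrt u)) →
      (q : ℝ) * ∫ u in Set.Ioi (0 : ℝ), u ^ (q - 1) * g u ≤
        D₆ * (∏ j ∈ Finset.Icc 1 (2 * q), ℓ j) *
          (ζ + (1 - f) ^ (J / 2 - 2 * q + 1) + (J : ℝ)⁻¹) := by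
  refine ⟨8 * q * D₄ * D₁ ^ (2*q), ?_⟩
  intro f ζ hf hf1 hζ hζ1 J hJ ℓ hpos hmono hζℓ hD₄ℓ g hgm hg01 hgprod
  have hIcc : ∀ k : ℕ, Finset.Icc 1 k = Finset.Ioc 0 k := fun k => Finset.Icc_add_one_left_eq_Ioc 0 k
  set M := J / 2 with hM
  have hMJ : M ≤ J := Nat.div_le_self _ _
  have hMq : 4 * q + 1 ≤ M := by omega
  set n := M - 2 * q with hn
  have hn1 : 1 ≤ n := by omega
  have hJpos : 0 < J := by omega
  set L := ℓ (2 * q) with hLdef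
  have hL : 0 < L := hpos _ (by omega) (by omega)
  set A := (ζ * D₁ * L) ^ 2 with hAdef
  set cbar := D₁ * D₄ * L with hcbardef
  set T := cbar ^ 2 with hTdef
  have hcbar : 0 < cbar := by positivity
  have hA : 0 < A := by positivity
  have hT : 0 < T := by positivity
  have hAT : A ≤ T := by
    have h1 : ζ * D₁ * L ≤ cbar := by
      rw [hcbardef]; nlinarith
    have h2 : 0 ≤ ζ * D₁ * L := by positivity
    nlinarith
  set cc := D₁ * ℓ (2 * q - 1) with hccdef
  have hcc : 0 < cc := by
    have := hpos (2*q-1) (by omega) (by omega)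
    positivity
  have hccζ : cc ≤ ζ * (D₁ * L) := by
    have := hζℓ
    rw [hccdef]; nlinarith
  have hccL : cc ≤ D₁ * L := by
    have := hmono (2*q-1) (2*q) (by omega) (by omega) (by omega)
    rw [hccdef]; nlinarith
  set P₂ := ∏ j ∈ Finset.Ioc 0 (2*q-2), (D₁ * ℓ j) with hP₂def
  set P := ∏ j ∈ Finset.Ioc 0 (2*q), (D₁ * ℓ j) with hPdef
  have hP₂pos : 0 < P₂ := by
    apply Finset.prod_pos
    intro j hj
    rw [Finset.mem_Ioc] at hj
    exact mul_pos hD₁ (hpos j (by omega) (by omega))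
  have hPfact : P = P₂ * cc * (D₁ * L) := by
    have e : Finset.Ioc 0 (2*q) = Finset.Ioc 0 ((2*q-2)+1+1) := by congr 1; omega
    rw [hPdef, e, Finset.prod_Ioc_succ_top (by omega), Finset.prod_Ioc_succ_top (by omega)]
    rw [hP₂def, hccdef, hLdef]
    rw [show 2*q-2+1+1 = 2*q by omega, show 2*q-2+1 = 2*q-1 by omega]
  have hPpos : 0 < P := by rw [hPfact]; positivity
  -- the core pointwise chain
  have main_chain : ∀ t : ℝ, 0 < t → t ≤ 1 → ∀ u : ℝ, 0 < u →
      u ^ (q-1) * (∏ j ∈ Finset.Ioc 0 M, min t (D₁ * ℓ j / Real.sqrt u)) ≤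
        t ^ (n+1) * (P₂ * min 1 (cc / Real.sqrt u)) := by
    intro t ht ht1 u hu
    have hsu : 0 < Real.sqrt u := Real.sqrt_pos.mpr hu
    have hnonneg : ∀ j, 1 ≤ j → j ≤ J → 0 ≤ D₁ * ℓ j / Real.sqrt u := by
      intro j h1 h2
      have := hpos j h1 h2
      positivity
    have hsplit : (∏ j ∈ Finset.Ioc 0 M, min t (D₁ * ℓ j / Real.sqrt u)) =
        (∏ j ∈ Finset.Ioc 0 (2*q-1), min t (D₁ * ℓ j / Real.sqrt u)) *
        (∏ j ∈ Finset.Ioc (2*q-1) M, min t (D₁ * ℓ j / Real.sqrt u)) :=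
      (Finset.prod_Ioc_consecutive _ (by omega) (by omega)).symm
    have h2nd : (∏ j ∈ Finset.Ioc (2*q-1) M, min t (D₁ * ℓ j / Real.sqrt u)) ≤ t ^ (n+1) := by
      calc (∏ j ∈ Finset.Ioc (2*q-1) M, min t (D₁ * ℓ j / Real.sqrt u))
          ≤ ∏ _j ∈ Finset.Ioc (2*q-1) M, t := by
            apply Finset.prod_le_prod
            · intro j hj
              rw [Finset.mem_Ioc] at hj
              exact le_min ht.le (hnonneg j (by omega) (by omega))
            · intro j _; exact min_le_left _ _
        _ = t ^ (n+1) := by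
            rw [Finset.prod_const, Nat.card_Ioc]; congr 1; omega
    have h1st : (∏ j ∈ Finset.Ioc 0 (2*q-1), min t (D₁ * ℓ j / Real.sqrt u)) ≤
        (∏ j ∈ Finset.Ioc 0 (2*q-2), (D₁ * ℓ j / Real.sqrt u)) * min 1 (cc / Real.sqrt u) := by
      rw [show 2*q-1 = (2*q-2)+1 by omega, Finset.prod_Ioc_succ_top (by omega)]
      apply mul_le_mul
      · apply Finset.prod_le_prod
        · intro j hj
          rw [Finset.mem_Ioc] at hj
          exact le_min ht.le (hnonneg j (by omega) (by omega))
        · intro j _; exact min_le_right _ _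
      · rw [show 2*q-2+1 = 2*q-1 by omega, ← hccdef]
        exact min_le_min ht1 le_rfl
      · apply le_min ht.le
        rw [show 2*q-2+1 = 2*q-1 by omega, ← hccdef]
        exact div_nonneg hcc.le hsu.le
      · apply Finset.prod_nonneg
        intro j hj
        rw [Finset.mem_Ioc] at hj
        exact hnonneg j (by omega) (by omega)
    have h1stnonneg : (0:ℝ) ≤ ∏ j ∈ Finset.Ioc 0 (2*q-1), min t (D₁ * ℓ j / Real.sqrt u) := by
      apply Finset.prod_nonneg
      intro j hj
      rw [Finset.mem_Ioc] at hj
      exact le_min ht.le (hnonneg j (by omega) (by omega))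
    have hproddiv : (∏ j ∈ Finset.Ioc 0 (2*q-2), (D₁ * ℓ j / Real.sqrt u)) = P₂ / u ^ (q-1) := by
      rw [Finset.prod_div_distrib, Finset.prod_const, Nat.card_Ioc, ← hP₂def]
      congr 1
      rw [show 2*q-2-0 = 2*(q-1) by omega, pow_mul, Real.sq_sqrt hu.le]
    have hupow : (0:ℝ) < u ^ (q-1) := by positivity
    calc u ^ (q-1) * (∏ j ∈ Finset.Ioc 0 M, min t (D₁ * ℓ j / Real.sqrt u))
        = u ^ (q-1) * ((∏ j ∈ Finset.Ioc 0 (2*q-1), min t (D₁ * ℓ j / Real.sqrt u)) *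
            (∏ j ∈ Finset.Ioc (2*q-1) M, min t (D₁ * ℓ j / Real.sqrt u))) := by rw [hsplit]
      _ ≤ u ^ (q-1) * (((P₂ / u ^ (q-1)) * min 1 (cc / Real.sqrt u)) * t ^ (n+1)) := by
          apply mul_le_mul_of_nonneg_left _ hupow.le
          rw [← hproddiv]
          apply mul_le_mul h1st h2nd _ _
          · apply Finset.prod_nonneg
            intro j hj
            rw [Finset.mem_Ioc] at hj
            exact le_min ht.le (hnonneg j (by omega) (by omega))
          · apply mul_nonneg
            · apply Finset.prod_nonneg
              intro j hj
              rw [Finset.mem_Ioc] at hj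
              exact hnonneg j (by omega) (by omega)
            · exact le_min zero_le_one (div_nonneg hcc.le hsu.le)
      _ = t ^ (n+1) * (P₂ * min 1 (cc / Real.sqrt u)) := by
          field_simp
  -- key pointwise bound on (0, ∞)
  have key : ∀ u : ℝ, 0 < u → u ^ (q-1) * g u ≤
      (if u < A then 1 else (1-f)^(n+1)) * (P₂ * min 1 (cc / Real.sqrt u)) := by
    intro u hu
    have hgu := hgprod u hu
    rw [hIcc] at hgu
    have hupow : (0:ℝ) ≤ u ^ (q-1) := by positivity
    by_cases huA : u < A
    · rw [if_pos huA]
      simp only [if_pos huA] at hgu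
      have hmc := main_chain 1 one_pos le_rfl u hu
      rw [one_pow] at hmc
      calc u ^ (q-1) * g u
          ≤ u ^ (q-1) * ∏ j ∈ Finset.Ioc 0 M, min 1 (D₁ * ℓ j / Real.sqrt u) :=
            mul_le_mul_of_nonneg_left hgu hupow
        _ ≤ 1 * (P₂ * min 1 (cc / Real.sqrt u)) := hmc

    · rw [if_neg huA]
      simp only [if_neg huA] at hgu
      have h1f : (0:ℝ) < 1 - f := by linarith
      have hmc := main_chain (1-f) h1f (by linarith) u hu
      calc u ^ (q-1) * g u
          ≤ u ^ (q-1) * ∏ j ∈ Finset.Ioc 0 M, min (1-f) (D₁ * ℓ j / Real.sqrt u) :=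
            mul_le_mul_of_nonneg_left hgu hupow
        _ ≤ (1-f)^(n+1) * (P₂ * min 1 (cc / Real.sqrt u)) := hmc
  -- pointwise bound on [T, ∞)
  have ha : (-1 - (n:ℝ)/2) < -1 := by
    have : (1:ℝ) ≤ (n:ℝ) := by exact_mod_cast hn1
    linarith
  have keyT : ∀ u : ℝ, T ≤ u → u ^ (q-1) * g u ≤ (P * cbar^n) * u ^ (-1 - (n:ℝ)/2) := by
    intro u huT
    have hu : 0 < u := lt_of_lt_of_le hT huT
    have hsu : 0 < Real.sqrt u := Real.sqrt_pos.mpr hu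
    have hgu := hgprod u hu
    rw [hIcc] at hgu
    have hstep1 : g u ≤ ∏ j ∈ Finset.Ioc 0 M, (D₁ * ℓ j / Real.sqrt u) := by
      refine le_trans hgu (Finset.prod_le_prod ?_ ?_)
      · intro j hj
        rw [Finset.mem_Ioc] at hj
        have hℓj := hpos j (by omega) (by omega)
        split_ifs
        · exact le_min zero_le_one (by positivity)
        · exact le_min (by linarith) (by positivity)
      · intro j _
        split_ifs <;> exact min_le_right _ _
    have hsplit : (∏ j ∈ Finset.Ioc 0 M, (D₁ * ℓ j / Real.sqrt u)) =
        (∏ j ∈ Finset.Ioc 0 (2*q), (D₁ * ℓ j / Real.sqrt u)) *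
        (∏ j ∈ Finset.Ioc (2*q) M, (D₁ * ℓ j / Real.sqrt u)) :=
      (Finset.prod_Ioc_consecutive _ (by omega) (by omega)).symm
    have htail : (∏ j ∈ Finset.Ioc (2*q) M, (D₁ * ℓ j / Real.sqrt u)) ≤ (cbar / Real.sqrt u)^n := by
      calc (∏ j ∈ Finset.Ioc (2*q) M, (D₁ * ℓ j / Real.sqrt u))
          ≤ ∏ _j ∈ Finset.Ioc (2*q) M, (cbar / Real.sqrt u) := by
            apply Finset.prod_le_prod
            · intro j hj
              rw [Finset.mem_Ioc] at hj
              have := hpos j (by omega) (by omega)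
              positivity
            · intro j hj
              rw [Finset.mem_Ioc] at hj
              have h1 : ℓ j ≤ D₄ * L := hD₄ℓ j (by omega) (by omega)
              have h2 : D₁ * ℓ j ≤ cbar := by rw [hcbardef]; nlinarith
              gcongr
        _ = (cbar / Real.sqrt u)^n := by
            rw [Finset.prod_const, Nat.card_Ioc]
    have hhead : (∏ j ∈ Finset.Ioc 0 (2*q), (D₁ * ℓ j / Real.sqrt u)) = P / Real.sqrt u ^ (2*q) := by
      rw [Finset.prod_div_distrib, Finset.prod_const, Nat.card_Ioc, Nat.sub_zero, ← hPdef]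
    have hstep2 : g u ≤ P / Real.sqrt u ^ (2*q) * (cbar / Real.sqrt u)^n := by
      refine hstep1.trans ?_
      rw [hsplit, hhead]
      apply mul_le_mul_of_nonneg_left htail (by positivity)
    calc u ^ (q-1) * g u
        ≤ u ^ (q-1) * (P / Real.sqrt u ^ (2*q) * (cbar / Real.sqrt u)^n) :=
          mul_le_mul_of_nonneg_left hstep2 (by positivity)
      _ = (P * cbar^n) * u ^ (-1 - (n:ℝ)/2) := alg_helper P cbar u hu q n hq
  -- the integrand
  set F := fun u : ℝ => u ^ (q-1) * g u with hFdef
  have hFmeas : Measurable F := (measurable_id.pow_const (q-1)).mul hgm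
  have hFnonneg : ∀ u : ℝ, 0 < u → 0 ≤ F u := fun u hu =>
    mul_nonneg (by positivity) (hg01 u hu).1
  -- integrability
  have hintT : IntegrableOn F (Set.Ioc 0 T) := by
    apply Measure.integrableOn_of_bounded (M := (max 1 T)^(q-1))
    · simp [Real.volume_Ioc]
    · exact hFmeas.aestronglyMeasurable
    · rw [ae_restrict_iff' measurableSet_Ioc]
      filter_upwards with u hu
      rw [Real.norm_eq_abs, abs_of_nonneg (hFnonneg u hu.1)]
      have h1 : F u ≤ u ^ (q-1) := by
        have := (hg01 u hu.1).2
        have hp : (0:ℝ) < u ^ (q-1) := pow_pos hu.1 _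
        calc F u = u ^ (q-1) * g u := rfl
          _ ≤ u ^ (q-1) * 1 := mul_le_mul_of_nonneg_left this hp.le
          _ = u ^ (q-1) := mul_one _
      exact h1.trans (pow_le_pow_left₀ hu.1.le (le_trans hu.2 (le_max_right 1 T)) _)
  have hintIoi : IntegrableOn F (Set.Ioi T) := by
    apply Integrable.mono' ((integrableOn_Ioi_rpow_of_lt ha hT).const_mul (P * cbar^n))
    · exact hFmeas.aestronglyMeasurable
    · rw [ae_restrict_iff' measurableSet_Ioi]
      filter_upwards with u hu
      rw [Real.norm_eq_abs, abs_of_nonneg (hFnonneg u (lt_trans hT hu))]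
      exact keyT u hu.le
  have hintA : IntegrableOn F (Set.Ioc 0 A) := hintT.mono_set (Set.Ioc_subset_Ioc_right hAT)
  have hintAT : IntegrableOn F (Set.Ioc A T) := hintT.mono_set (Set.Ioc_subset_Ioc_left hA.le)
  -- splitting the integral
  have hdisj1 : Disjoint (Set.Ioc (0:ℝ) T) (Set.Ioi T) := by
    rw [Set.disjoint_left]
    rintro x ⟨_, h2⟩ h3
    exact absurd h3 (not_lt.mpr h2)
  have hsplitI : ∫ u in Set.Ioi (0:ℝ), F u = (∫ u in Set.Ioc 0 T, F u) + ∫ u in Set.Ioi T, F u := by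
    rw [← Set.Ioc_union_Ioi_eq_Ioi hT.le, setIntegral_union hdisj1 measurableSet_Ioi hintT hintIoi]
  have hdisj2 : Disjoint (Set.Ioc (0:ℝ) A) (Set.Ioc A T) := by
    rw [Set.disjoint_left]
    rintro x ⟨_, h2⟩ ⟨h3, _⟩
    exact absurd h3 (not_lt.mpr h2)
  have hsplitII : ∫ u in Set.Ioc (0:ℝ) T, F u = (∫ u in Set.Ioc 0 A, F u) + ∫ u in Set.Ioc A T, F u := by
    rw [← Set.Ioc_union_Ioc_eq_Ioc hA.le hAT, setIntegral_union hdisj2 measurableSet_Ioc hintA hintAT]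
  -- the auxiliary function B
  set Bf := fun u : ℝ => P₂ * min 1 (cc / Real.sqrt u) with hBfdef
  have hBf0 : ∀ u : ℝ, 0 ≤ Bf u := fun u =>
    mul_nonneg hP₂pos.le (le_min zero_le_one (div_nonneg hcc.le (Real.sqrt_nonneg u)))
  have hBint : ∀ X : ℝ, IntegrableOn Bf (Set.Ioc 0 X) := by
    intro X
    apply Measure.integrableOn_of_bounded (M := P₂)
    · simp [Real.volume_Ioc]
    · exact (measurable_const.mul (measurable_const.min
        (measurable_const.div Real.continuous_sqrt.measurable))).aestronglyMeasurable
    · filter_upwards with u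
      rw [Real.norm_eq_abs, abs_of_nonneg (hBf0 u)]
      have h1 : min 1 (cc / Real.sqrt u) ≤ 1 := min_le_left _ _
      calc Bf u = P₂ * min 1 (cc / Real.sqrt u) := rfl
        _ ≤ P₂ * 1 := mul_le_mul_of_nonneg_left h1 hP₂pos.le
        _ = P₂ := mul_one _
  -- bound 1
  have bound1 : ∫ u in Set.Ioc (0:ℝ) A, F u ≤ 3 * ζ * P := by
    have h1 : ∫ u in Set.Ioc (0:ℝ) A, F u ≤ ∫ u in Set.Ioc (0:ℝ) A, Bf u := by
      apply setIntegral_mono_on hintA (hBint A) measurableSet_Ioc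
      intro u hu
      have hk := key u hu.1
      split_ifs at hk with h
      · rw [one_mul] at hk; exact hk
      · refine hk.trans ?_
        have hpow : (1-f)^(n+1) ≤ 1 := pow_le_one₀ (by linarith) (by linarith)
        have hB := hBf0 u
        calc (1-f)^(n+1) * (P₂ * min 1 (cc / Real.sqrt u)) = (1-f)^(n+1) * Bf u := rfl
          _ ≤ 1 * Bf u := mul_le_mul_of_nonneg_right hpow hB
          _ = Bf u := one_mul _
    have h2 : ∫ u in Set.Ioc (0:ℝ) A, Bf u = P₂ * ∫ u in Set.Ioc (0:ℝ) A, min 1 (cc / Real.sqrt u) :=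
      integral_const_mul _ _
    have h3 := lemA cc A hcc hA.le
    have hsA : Real.sqrt A = ζ * D₁ * L := Real.sqrt_sq (by positivity)
    rw [hsA] at h3
    refine h1.trans ?_
    rw [h2]
    calc P₂ * ∫ u in Set.Ioc (0:ℝ) A, min 1 (cc / Real.sqrt u)
        ≤ P₂ * (cc^2 + 2*cc*(ζ * D₁ * L)) := mul_le_mul_of_nonneg_left h3 hP₂pos.le
      _ ≤ 3 * ζ * P := by rw [hPfact]; nlinarith [hP₂pos, hcc, hccζ, mul_pos hD₁ hL]
  -- bound 2
  have bound2 : ∫ u in Set.Ioc A T, F u ≤ (1-f)^(n+1) * (3 * D₄ * P) := by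
    have h1 : ∫ u in Set.Ioc A T, F u ≤ ∫ u in Set.Ioc A T, (1-f)^(n+1) * Bf u := by
      apply setIntegral_mono_on hintAT (((hBint T).mono_set
        (Set.Ioc_subset_Ioc_left hA.le)).const_mul _) measurableSet_Ioc
      intro u hu
      have hu0 : 0 < u := lt_trans hA hu.1
      have hk := key u hu0
      rw [if_neg (not_lt.mpr hu.1.le)] at hk
      exact hk
    have h2 : ∫ u in Set.Ioc A T, (1-f)^(n+1) * Bf u = (1-f)^(n+1) * ∫ u in Set.Ioc A T, Bf u :=
      integral_const_mul _ _
    have h3 : ∫ u in Set.Ioc A T, Bf u ≤ ∫ u in Set.Ioc (0:ℝ) T, Bf u := by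
      apply setIntegral_mono_set (hBint T)
      · filter_upwards with u using hBf0 u
      · exact (Set.Ioc_subset_Ioc_left hA.le).eventuallyLE
    have h4 : ∫ u in Set.Ioc (0:ℝ) T, Bf u = P₂ * ∫ u in Set.Ioc (0:ℝ) T, min 1 (cc / Real.sqrt u) :=
      integral_const_mul _ _
    have h5 := lemA cc T hcc hT.le
    have hsT : Real.sqrt T = cbar := Real.sqrt_sq hcbar.le
    rw [hsT] at h5
    have h6 : ∫ u in Set.Ioc (0:ℝ) T, Bf u ≤ 3 * D₄ * P := by
      rw [h4]
      calc P₂ * ∫ u in Set.Ioc (0:ℝ) T, min 1 (cc / Real.sqrt u)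
          ≤ P₂ * (cc^2 + 2*cc*cbar) := mul_le_mul_of_nonneg_left h5 hP₂pos.le
        _ ≤ P₂ * (3*D₄*(cc*(D₁*L))) := by
            apply mul_le_mul_of_nonneg_left _ hP₂pos.le
            rw [hcbardef]
            nlinarith [mul_le_mul_of_nonneg_left hccL hcc.le,
              mul_nonneg (mul_nonneg hcc.le hD₁.le) hL.le, hD₄]
        _ = 3 * D₄ * P := by rw [hPfact]; ring
    have hpow : (0:ℝ) ≤ (1-f)^(n+1) := pow_nonneg (by linarith) _
    refine h1.trans ?_
    rw [h2]
    exact mul_le_mul_of_nonneg_left (h3.trans h6) hpow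
  -- bound 3
  have bound3 : ∫ u in Set.Ioi T, F u ≤ P * (8 / (J:ℝ)) := by
    have h1 : ∫ u in Set.Ioi T, F u ≤ ∫ u in Set.Ioi T, (P * cbar^n) * u ^ (-1 - (n:ℝ)/2) :=
      setIntegral_mono_on hintIoi ((integrableOn_Ioi_rpow_of_lt ha hT).const_mul _)
        measurableSet_Ioi (fun u hu => keyT u (le_of_lt hu))
    have h2 : ∫ u in Set.Ioi T, (P * cbar^n) * u ^ (-1 - (n:ℝ)/2)
        = (P * cbar^n) * (-T ^ ((-1 - (n:ℝ)/2) + 1) / ((-1 - (n:ℝ)/2) + 1)) := by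
      rw [integral_const_mul, integral_Ioi_rpow_of_lt ha hT]
    have hTe : T ^ ((-1 - (n:ℝ)/2) + 1) = (cbar^n)⁻¹ := by
      rw [hTdef, ← Real.rpow_natCast cbar 2, ← Real.rpow_natCast cbar n,
        ← Real.rpow_mul hcbar.le, ← Real.rpow_neg hcbar.le]
      congr 1
      push_cast
      ring
    have hnpos : (0:ℝ) < (n:ℝ) := by exact_mod_cast hn1
    have hJr : (0:ℝ) < (J:ℝ) := by exact_mod_cast hJpos
    have hJn : (J:ℝ) ≤ 4 * (n:ℝ) := by
      have : J ≤ 4 * n := by omega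
      exact_mod_cast this
    have hcbn : (0:ℝ) < cbar^n := by positivity
    have h3 : (P * cbar^n) * (-T ^ ((-1 - (n:ℝ)/2) + 1) / ((-1 - (n:ℝ)/2) + 1)) = P * (2 / (n:ℝ)) := by
      rw [hTe, show (-1 - (n:ℝ)/2) + 1 = -((n:ℝ)/2) by ring, neg_div_neg_eq,
        mul_assoc, mul_div_assoc', mul_inv_cancel₀ hcbn.ne', one_div_div]
    have h4 : P * (2 / (n:ℝ)) ≤ P * (8 / (J:ℝ)) := by
      apply mul_le_mul_of_nonneg_left _ hPpos.le
      rw [div_le_div_iff₀ hnpos hJr]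
      linarith
    rw [h2, h3] at h1
    exact h1.trans h4
  -- assembling
  have hsum : ∫ u in Set.Ioi (0:ℝ), F u ≤ 3*ζ*P + (1-f)^(n+1) * (3*D₄*P) + P*(8/(J:ℝ)) := by
    rw [hsplitI, hsplitII]
    linarith [bound1, bound2, bound3]
  have hPeq : P = D₁^(2*q) * ∏ j ∈ Finset.Icc 1 (2*q), ℓ j := by
    rw [hIcc, hPdef, Finset.prod_mul_distrib, Finset.prod_const, Nat.card_Ioc, Nat.sub_zero]
  have hfin : 3*ζ*P + (1-f)^(n+1) * (3*D₄*P) + P*(8/(J:ℝ))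
      ≤ (8*D₄*P) * (ζ + (1-f)^(n+1) + (J:ℝ)⁻¹) := by
    have hX : (0:ℝ) ≤ (1-f)^(n+1) := pow_nonneg (by linarith) _
    have hJr : (0:ℝ) < (J:ℝ) := by exact_mod_cast hJpos
    have hJinv : (0:ℝ) < (J:ℝ)⁻¹ := by positivity
    have hdiv : P*(8/(J:ℝ)) = 8 * P * (J:ℝ)⁻¹ := by ring
    nlinarith [mul_pos hPpos hζ, mul_nonneg (mul_nonneg hX hPpos.le) (by linarith : (0:ℝ) ≤ D₄ - 1),
      mul_pos hPpos hJinv, mul_nonneg (mul_pos hPpos hζ).le (by linarith : (0:ℝ) ≤ D₄ - 1),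
      mul_nonneg (mul_pos hPpos hJinv).le (by linarith : (0:ℝ) ≤ D₄ - 1)]
  have hqr : (0:ℝ) ≤ (q:ℝ) := by positivity
  calc (q:ℝ) * ∫ u in Set.Ioi (0:ℝ), F u
      ≤ (q:ℝ) * ((8*D₄*P) * (ζ + (1-f)^(n+1) + (J:ℝ)⁻¹)) :=
        mul_le_mul_of_nonneg_left (hsum.trans hfin) hqr
    _ = 8*(q:ℝ)*D₄*D₁^(2*q) * (∏ j ∈ Finset.Icc 1 (2*q), ℓ j) * (ζ + (1-f)^(n+1) + (J:ℝ)⁻¹) := by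
        rw [hPeq]; ring
end

section
/- Let n ≥ 1 and equip Ω = {−1, +1}^n with the uniform probability measure P; set S_m(ω) = ω₁ + ⋯ + ω_m for 0 ≤ m ≤ n (so S_0 = 0). Then for every integer x ≥ 1, P{S_n < −x} ≤ (1/2)·P{min_{0 ≤ m ≤ n} S_m ≤ −x}. (The reflection estimate (4.21), stated for the embedded discrete-time simple symmetric random walk.) -/
open Finset

namespace RefAux

abbrev E : Finset ℤ := {-1, 1}

def S (n m : ℕ) (ω : Fin n → E) : ℤ :=
  ∑ i ∈ Finset.univ.filter (fun i : Fin n => (i : ℕ) < m), (ω i : ℤ)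

lemma S_zero (n : ℕ) (ω : Fin n → E) : S n 0 ω = 0 := by simp [S]

lemma step_mem {n : ℕ} (ω : Fin n → E) (i : Fin n) :
    ((ω i : ℤ)) = -1 ∨ ((ω i : ℤ)) = 1 := by
  have h := (ω i).2
  rw [Finset.mem_insert, Finset.mem_singleton] at h
  exact h

lemma S_succ (n m : ℕ) (hm : m < n) (ω : Fin n → E) :
    S n (m + 1) ω = S n m ω + (ω ⟨m, hm⟩ : ℤ) := by
  unfold S
  have hins : Finset.univ.filter (fun i : Fin n => (i : ℕ) < m + 1)
      = insert ⟨m, hm⟩ (Finset.univ.filter (fun i : Fin n => (i : ℕ) < m)) := by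
    ext i
    simp only [Finset.mem_filter, Finset.mem_univ, true_and, Finset.mem_insert, Fin.ext_iff]
    omega
  rw [hins, Finset.sum_insert (by simp)]
  ring

def negE (a : E) : E := ⟨-(a : ℤ), by
  have := a.2
  simp only [E, Finset.mem_insert, Finset.mem_singleton] at this ⊢
  rcases this with h | h <;> simp [h]⟩

@[simp] lemma negE_negE (a : E) : negE (negE a) = a := by
  apply Subtype.ext
  simp [negE]

@[simp] lemma coe_negE (a : E) : ((negE a : E) : ℤ) = -(a : ℤ) := rfl

variable (n : ℕ) (x : ℤ)

def hit (ω : Fin n → E) : Prop := ∃ m, m ≤ n ∧ S n m ω ≤ -x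

open Classical in
noncomputable def tau (ω : Fin n → E) : ℕ :=
  if h : hit n x ω then Nat.find (p := fun m => m ≤ n ∧ S n m ω ≤ -x) h else 0

variable {n x}

lemma tau_le {ω : Fin n → E} (h : hit n x ω) : tau n x ω ≤ n := by
  rw [tau, dif_pos h]
  exact (Nat.find_spec h).1

lemma S_tau_le {ω : Fin n → E} (h : hit n x ω) : S n (tau n x ω) ω ≤ -x := by
  rw [tau, dif_pos h]
  exact (Nat.find_spec h).2

lemma tau_min {ω : Fin n → E} (h : hit n x ω) {k : ℕ} (hk : k < tau n x ω) :
    ¬ S n k ω ≤ -x := by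
  rw [tau, dif_pos h] at hk
  intro hS
  exact Nat.find_min (p := fun m => m ≤ n ∧ S n m ω ≤ -x) h hk
    ⟨hk.le.trans (Nat.find_spec (p := fun m => m ≤ n ∧ S n m ω ≤ -x) h).1, hS⟩

lemma tau_pos (hx : 1 ≤ x) {ω : Fin n → E} (h : hit n x ω) : 1 ≤ tau n x ω := by
  by_contra hc
  push_neg at hc
  interval_cases ht : (tau n x ω)
  · have := S_tau_le h
    rw [ht, S_zero] at this
    omega

lemma S_tau_eq (hx : 1 ≤ x) {ω : Fin n → E} (h : hit n x ω) :
    S n (tau n x ω) ω = -x := by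
  have h1 : 1 ≤ tau n x ω := tau_pos hx h
  have hlt : tau n x ω - 1 < n := by
    have := tau_le h
    omega
  have hstep := S_succ n (tau n x ω - 1) hlt ω
  have heq : tau n x ω - 1 + 1 = tau n x ω := by omega
  rw [heq] at hstep
  have hmin : ¬ S n (tau n x ω - 1) ω ≤ -x := tau_min h (by omega)
  have hω := step_mem ω ⟨tau n x ω - 1, hlt⟩
  have hle := S_tau_le h
  rcases hω with h' | h' <;> omega

variable (n x)

noncomputable def refl (ω : Fin n → E) : Fin n → E :=
  fun i => if (i : ℕ) < tau n x ω then ω i else negE (ω i)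

variable {n x}

lemma S_refl_of_le {ω : Fin n → E} {m : ℕ} (hm : m ≤ tau n x ω) :
    S n m (refl n x ω) = S n m ω := by
  unfold S
  apply Finset.sum_congr rfl
  intro i hi
  simp only [Finset.mem_filter] at hi
  have : (i : ℕ) < tau n x ω := lt_of_lt_of_le hi.2 hm
  simp [refl, this]

lemma hit_refl {ω : Fin n → E} (h : hit n x ω) : hit n x (refl n x ω) :=
  ⟨tau n x ω, tau_le h, by rw [S_refl_of_le le_rfl]; exact S_tau_le h⟩

lemma tau_refl {ω : Fin n → E} (h : hit n x ω) : tau n x (refl n x ω) = tau n x ω := by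
  have h' : hit n x (refl n x ω) := hit_refl h
  apply le_antisymm
  · rw [tau, dif_pos h']
    exact Nat.find_le ⟨tau_le h, by rw [S_refl_of_le le_rfl]; exact S_tau_le h⟩
  · by_contra hc
    push_neg at hc
    have hk : S n (tau n x (refl n x ω)) (refl n x ω) ≤ -x := S_tau_le h'
    rw [S_refl_of_le hc.le] at hk
    exact tau_min h hc hk

lemma refl_refl {ω : Fin n → E} (h : hit n x ω) : refl n x (refl n x ω) = ω := by
  funext i
  simp only [refl, tau_refl h]
  by_cases hi : (i : ℕ) < tau n x ω <;> simp [hi]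

lemma S_refl_add {ω : Fin n → E} (h : hit n x ω) :
    S n n (refl n x ω) + S n n ω = 2 * S n (tau n x ω) ω := by
  unfold S
  rw [← Finset.sum_add_distrib]
  have : ∀ i : Fin n,
      ((refl n x ω i : ℤ) + (ω i : ℤ)) = if (i : ℕ) < tau n x ω then 2 * (ω i : ℤ) else 0 := by
    intro i
    by_cases hi : (i : ℕ) < tau n x ω <;> simp [refl, hi] <;> ring
  calc ∑ i ∈ Finset.univ.filter (fun i : Fin n => (i : ℕ) < n),
          ((refl n x ω i : ℤ) + (ω i : ℤ))
      = ∑ i : Fin n, (if (i : ℕ) < tau n x ω then 2 * (ω i : ℤ) else 0) := by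
        rw [show Finset.univ.filter (fun i : Fin n => (i : ℕ) < n) = Finset.univ by
          ext i; simp [i.isLt]]
        exact Finset.sum_congr rfl fun i _ => this i
    _ = ∑ i ∈ Finset.univ.filter (fun i : Fin n => (i : ℕ) < tau n x ω), 2 * (ω i : ℤ) :=
        (Finset.sum_filter _ _).symm
    _ = 2 * ∑ i ∈ Finset.univ.filter (fun i : Fin n => (i : ℕ) < tau n x ω), (ω i : ℤ) := by
        rw [Finset.mul_sum]

end RefAux

/-- The reflection estimate (4.21) for the embedded discrete-time simple symmetric
random walk: `P{S_n < -x} ≤ (1/2) P{min_{0 ≤ m ≤ n} S_m ≤ -x}`, where the uniform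
probability of an event is its cardinality divided by `2^n`. -/
theorem reflection_estimate (n : ℕ) (hn : 1 ≤ n) (x : ℤ) (hx : 1 ≤ x) :
    let Ω := Fin n → ({-1, 1} : Finset ℤ)
    let S : ℕ → Ω → ℤ := fun m ω =>
      ∑ i ∈ Finset.univ.filter (fun i : Fin n => (i : ℕ) < m), (ω i : ℤ)
    ((Finset.univ.filter (fun ω : Ω => S n ω < -x)).card : ℝ) / 2 ^ n ≤
      (1 / 2) *
        (((Finset.univ.filter (fun ω : Ω => ∃ m ≤ n, S m ω ≤ -x)).card : ℝ) / 2 ^ n) := by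
  intro Ω S
  classical
  set B := Finset.univ.filter (fun ω : Ω => S n ω < -x) with hBdef
  set A := Finset.univ.filter (fun ω : Ω => ∃ m ≤ n, S m ω ≤ -x) with hAdef
  have hSdef : ∀ m (ω : Ω), S m ω = RefAux.S n m ω := fun m ω => rfl
  have hBmem : ∀ ω : Ω, ω ∈ B ↔ RefAux.S n n ω < -x := by
    intro ω; simp [hBdef, hSdef]
  have hAmem : ∀ ω : Ω, ω ∈ A ↔ RefAux.hit n x ω := by
    intro ω
    simp [hAdef, RefAux.hit, hSdef]
  have hBhit : ∀ ω : Ω, ω ∈ B → RefAux.hit n x ω := by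
    intro ω hω
    exact ⟨n, le_rfl, le_of_lt ((hBmem ω).1 hω)⟩
  have hBA : B ⊆ A := fun ω hω => (hAmem ω).2 (hBhit ω hω)
  have hmaps : ∀ ω ∈ B, RefAux.refl n x ω ∈ A \ B := by
    intro ω hω
    have h := hBhit ω hω
    rw [Finset.mem_sdiff]
    constructor
    · rw [hAmem]
      exact RefAux.hit_refl h
    · rw [hBmem]
      have hsum := RefAux.S_refl_add h
      rw [RefAux.S_tau_eq hx h] at hsum
      have hlt : RefAux.S n n ω < -x := (hBmem ω).1 hω
      push_neg
      omega
  have hinj : Set.InjOn (RefAux.refl n x) B := by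
    intro ω hω ω' hω' heq
    have h := hBhit ω (by simpa using hω)
    have h' := hBhit ω' (by simpa using hω')
    have := congrArg (RefAux.refl n x) heq
    rwa [RefAux.refl_refl h, RefAux.refl_refl h'] at this
  have hcard : B.card ≤ (A \ B).card :=
    Finset.card_le_card_of_injOn _ hmaps hinj
  have hsplit : (A \ B).card + B.card = A.card :=
    Finset.card_sdiff_add_card_eq_card hBA
  have key : 2 * B.card ≤ A.card := by omega
  have h2 : (0 : ℝ) < 2 ^ n := by positivity
  have keyR : 2 * (B.card : ℝ) ≤ (A.card : ℝ) := by exact_mod_cast key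
  rw [div_le_iff₀ h2]
  calc (B.card : ℝ) ≤ (A.card : ℝ) / 2 := by linarith
    _ = 1 / 2 * ((A.card : ℝ) / 2 ^ n) * 2 ^ n := by
        field_simp
end
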